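/- arXiv:1302.3507 — 6 statements merged into one kernel-verified Lean document; each statement's English description precedes it below -/
import Mathlib

section
/- Let H(p) = p·log p + (1−p)·log(1−p). For every positive integer m and every real p ∈ (0,1) such that p·m is an integer, one has √(2π)/e² ≤ C(m, pm)·√(m·p·(1−p))·e^{m·H(p)} ≤ e/(2π), where C(m, pm) is the binomial coefficient. -/
open Real Stirling Filter Topology

open Real Stirling Filter Topology

lemma sqrtpi_le_stirlingSeq {n : ℕ} (hn : n ≠ 0) : Real.sqrt π ≤ stirlingSeq n := by
  obtain ⟨k, rfl⟩ := Nat.exists_eq_succ_of_ne_zero hn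
  have h : Tendsto (stirlingSeq ∘ Nat.succ) atTop (𝓝 (Real.sqrt π)) :=
    (Filter.tendsto_add_atTop_iff_nat 1).mpr tendsto_stirlingSeq_sqrt_pi
  exact stirlingSeq'_antitone.le_of_tendsto h k

lemma stirlingSeq_le {n : ℕ} (hn : n ≠ 0) : stirlingSeq n ≤ Real.exp 1 / Real.sqrt 2 := by
  obtain ⟨k, rfl⟩ := Nat.exists_eq_succ_of_ne_zero hn
  have := stirlingSeq'_antitone (Nat.zero_le k)
  simpa using this

/-- Stirling-type estimates for the binomial coefficient.
`H(p) = p log p + (1-p) log (1-p)`; `r = p·m` is the integer value of `p·m`. -/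
theorem stmt3 (m : ℕ) (hm : 0 < m) (p : ℝ) (hp0 : 0 < p) (hp1 : p < 1)
    (r : ℕ) (hr : (r : ℝ) = p * m) :
    Real.sqrt (2 * Real.pi) / Real.exp 2 ≤
      (m.choose r : ℝ) * Real.sqrt (m * p * (1 - p)) *
        Real.exp (m * (p * Real.log p + (1 - p) * Real.log (1 - p))) ∧
    (m.choose r : ℝ) * Real.sqrt (m * p * (1 - p)) *
        Real.exp (m * (p * Real.log p + (1 - p) * Real.log (1 - p))) ≤
      Real.exp 1 / (2 * Real.pi) := by
  have hmR : (0:ℝ) < m := Nat.cast_pos.mpr hm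
  have hrR : (0:ℝ) < r := by rw [hr]; positivity
  have hrmR : (r:ℝ) < m := by rw [hr]; nlinarith
  have hrm : r < m := by exact_mod_cast hrmR
  set s := m - r with hs
  have hsR : (s:ℝ) = (1 - p) * m := by
    rw [hs, Nat.cast_sub hrm.le, hr]; ring
  have hsR0 : (0:ℝ) < s := by rw [hsR]; exact mul_pos (by linarith) hmR
  set H := p * Real.log p + (1 - p) * Real.log (1 - p) with hH
  have epos := Real.exp_pos 1
  -- identity I1
  have I1 : ((m:ℝ)/Real.exp 1)^m * Real.exp (m * H) =
      ((r:ℝ)/Real.exp 1)^r * ((s:ℝ)/Real.exp 1)^s := by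
    have e0 : ∀ (n : ℕ), (0:ℝ) < n → ((n:ℝ)/Real.exp 1)^n =
        Real.exp ((Real.log n - 1) * n) := by
      intro n hn
      rw [← Real.rpow_natCast ((n:ℝ)/Real.exp 1) n,
        Real.rpow_def_of_pos (div_pos hn epos),
        Real.log_div hn.ne' epos.ne', Real.log_exp]
    rw [e0 m hmR, e0 r hrR, e0 s hsR0, ← Real.exp_add, ← Real.exp_add]
    congr 1
    have lr : Real.log r = Real.log p + Real.log m := by rw [hr, Real.log_mul hp0.ne' hmR.ne']
    have ls : Real.log s = Real.log (1-p) + Real.log m := by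
      rw [hsR, Real.log_mul (by linarith) hmR.ne']
    have hrsR : (r:ℝ) + s = m := by rw [hr, hsR]; ring
    rw [lr, ls, hr, hsR, hH]
    nlinarith [hrsR]
  -- identity I2
  have I2 : Real.sqrt (2*(m:ℝ)) * Real.sqrt (m*p*(1-p)) * Real.sqrt 2 =
      Real.sqrt (2*(r:ℝ)) * Real.sqrt (2*(s:ℝ)) := by
    rw [← Real.sqrt_mul (by positivity), ← Real.sqrt_mul (by nlinarith),
        ← Real.sqrt_mul (by positivity)]
    congr 1
    rw [hr, hsR]; ring
  have I3 : Real.sqrt (m*p*(1-p)) * Real.exp (m*H) * Real.sqrt 2 *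
        (Real.sqrt (2*(m:ℝ)) * ((m:ℝ)/Real.exp 1)^m) =
      (Real.sqrt (2*(r:ℝ)) * ((r:ℝ)/Real.exp 1)^r) *
        (Real.sqrt (2*(s:ℝ)) * ((s:ℝ)/Real.exp 1)^s) := by
    calc _ = (Real.sqrt (2*(m:ℝ)) * Real.sqrt (m*p*(1-p)) * Real.sqrt 2) *
            (((m:ℝ)/Real.exp 1)^m * Real.exp (m*H)) := by ring
    _ = _ := by rw [I2, I1]; ring
  set W := Real.sqrt (m*p*(1-p)) with hW
  set X := Real.sqrt (2*(m:ℝ)) * ((m:ℝ)/Real.exp 1)^m with hX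
  set Y := Real.sqrt (2*(r:ℝ)) * ((r:ℝ)/Real.exp 1)^r with hY
  set Z := Real.sqrt (2*(s:ℝ)) * ((s:ℝ)/Real.exp 1)^s with hZ
  clear_value W X Y Z
  have hWp : (0:ℝ) < W := by
    rw [hW]; apply Real.sqrt_pos.mpr; nlinarith
  have hXp : (0:ℝ) < X := hX ▸
    mul_pos (Real.sqrt_pos.mpr (by linarith)) (pow_pos (div_pos hmR epos) m)
  have hYp : (0:ℝ) < Y := hY ▸
    mul_pos (Real.sqrt_pos.mpr (by linarith)) (pow_pos (div_pos hrR epos) r)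
  have hZp : (0:ℝ) < Z := hZ ▸
    mul_pos (Real.sqrt_pos.mpr (by linarith)) (pow_pos (div_pos hsR0 epos) s)
  have hfr : (0:ℝ) < (Nat.factorial r : ℝ) := by positivity
  have hfs : (0:ℝ) < (Nat.factorial s : ℝ) := by positivity
  have hfm : (0:ℝ) < (Nat.factorial m : ℝ) := by positivity
  have s2 : (0:ℝ) < Real.sqrt 2 := by positivity
  have sm' : stirlingSeq m = (Nat.factorial m : ℝ) / X := by rw [stirlingSeq, hX]
  have sr' : stirlingSeq r = (Nat.factorial r : ℝ) / Y := by rw [stirlingSeq, hY]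
  have ss' : stirlingSeq s = (Nat.factorial s : ℝ) / Z := by rw [stirlingSeq, hZ]
  have key : (m.choose r : ℝ) * W * Real.exp (m * H) =
      stirlingSeq m / (stirlingSeq r * stirlingSeq s * Real.sqrt 2) := by
    have hcc : (m.choose r : ℝ) = (Nat.factorial m : ℝ) /
        (Nat.factorial r * Nat.factorial s) := by
      rw [Nat.cast_choose ℝ hrm.le]
    rw [hcc, sm', sr', ss']
    field_simp
    linear_combination I3
  rw [key]
  have hr0 : r ≠ 0 := (Nat.cast_pos.mp hrR).ne'
  have hs0 : s ≠ 0 := (Nat.cast_pos.mp hsR0).ne'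
  have ha1 := sqrtpi_le_stirlingSeq hm.ne'
  have hb1 := sqrtpi_le_stirlingSeq hr0
  have hc1 := sqrtpi_le_stirlingSeq hs0
  have ha2 := stirlingSeq_le hm.ne'
  have hb2 := stirlingSeq_le hr0
  have hc2 := stirlingSeq_le hs0
  have sp : (0:ℝ) < Real.sqrt π := Real.sqrt_pos.mpr Real.pi_pos
  have spp : Real.sqrt π * Real.sqrt π = π := Real.mul_self_sqrt Real.pi_pos.le
  have s22 : Real.sqrt 2 * Real.sqrt 2 = 2 := Real.mul_self_sqrt (by norm_num)
  have h2pi : Real.sqrt (2*π) = Real.sqrt 2 * Real.sqrt π := Real.sqrt_mul (by norm_num) _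
  have he2 : Real.exp 2 = Real.exp 1 * Real.exp 1 := by rw [← Real.exp_add]; norm_num
  have hap : 0 < stirlingSeq m := lt_of_lt_of_le sp ha1
  have hbp : 0 < stirlingSeq r := lt_of_lt_of_le sp hb1
  have hcp : 0 < stirlingSeq s := lt_of_lt_of_le sp hc1
  have hden : 0 < stirlingSeq r * stirlingSeq s * Real.sqrt 2 :=
    mul_pos (mul_pos hbp hcp) s2
  have ha2' : stirlingSeq m * Real.sqrt 2 ≤ Real.exp 1 := (le_div_iff₀ s2).mp ha2
  have hb2' : stirlingSeq r * Real.sqrt 2 ≤ Real.exp 1 := (le_div_iff₀ s2).mp hb2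
  have hc2' : stirlingSeq s * Real.sqrt 2 ≤ Real.exp 1 := (le_div_iff₀ s2).mp hc2
  have hprod : (stirlingSeq r * Real.sqrt 2) * (stirlingSeq s * Real.sqrt 2) ≤
      Real.exp 1 * Real.exp 1 :=
    mul_le_mul hb2' hc2' (by positivity) (by positivity)
  have hprod2 : π ≤ stirlingSeq r * stirlingSeq s := by
    calc π = Real.sqrt π * Real.sqrt π := spp.symm
    _ ≤ _ := mul_le_mul hb1 hc1 sp.le hbp.le
  constructor
  · rw [h2pi, he2, div_le_div_iff₀ (by positivity) hden]
    calc Real.sqrt 2 * Real.sqrt π * (stirlingSeq r * stirlingSeq s * Real.sqrt 2)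
        = Real.sqrt π * ((stirlingSeq r * Real.sqrt 2) * (stirlingSeq s * Real.sqrt 2)) := by
          ring
      _ ≤ Real.sqrt π * (Real.exp 1 * Real.exp 1) := mul_le_mul_of_nonneg_left hprod sp.le
      _ ≤ stirlingSeq m * (Real.exp 1 * Real.exp 1) :=
          mul_le_mul_of_nonneg_right ha1 (by positivity)
  · rw [div_le_div_iff₀ hden (by positivity)]
    calc stirlingSeq m * (2*π) = (stirlingSeq m * Real.sqrt 2) * (Real.sqrt 2 * π) := by
          have h22 : (Real.sqrt 2)^2 = 2 := Real.sq_sqrt (by norm_num)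
          linear_combination (-(stirlingSeq m * π)) * h22
      _ ≤ Real.exp 1 * (Real.sqrt 2 * π) := mul_le_mul_of_nonneg_right ha2' (by positivity)
      _ ≤ Real.exp 1 * (Real.sqrt 2 * (stirlingSeq r * stirlingSeq s)) := by gcongr
      _ = Real.exp 1 * (stirlingSeq r * stirlingSeq s * Real.sqrt 2) := by ring
end

section
/- Let d₁, d₂, N be positive integers and K a real number such that 1 ≤ d₁ ≤ 2N/3, 1 ≤ d₂ ≤ 2N/3, and 1 ≤ K ≤ d₁d₂/(100N), and set Δ = √(d₁·d₂·K/N). Then for every integer t satisfying d₁d₂/N + Δ ≤ t ≤ d₁d₂/N + 2Δ, one has C(d₁, t)·C(N−d₁, d₂−t) / C(N, d₂) ≥ 4·e^{−40K} / √(d₁d₂/N + Δ). -/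
open Real

lemma stmt5_stirling_lb (n : ℕ) (hn : 1 ≤ n) :
    Real.sqrt π ≤ Stirling.stirlingSeq n := by
  obtain ⟨m, rfl⟩ := Nat.exists_eq_add_of_le hn
  have hanti := Stirling.stirlingSeq'_antitone
  have hlim : Filter.Tendsto (Stirling.stirlingSeq ∘ Nat.succ) Filter.atTop (nhds (Real.sqrt π)) :=
    Stirling.tendsto_stirlingSeq_sqrt_pi.comp (Filter.tendsto_add_atTop_nat 1)
  have := le_of_tendsto hlim (Filter.eventually_atTop.2 ⟨m, fun k hk => hanti hk⟩)
  simpa [Nat.succ_eq_add_one, Nat.add_comm] using this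

lemma stmt5_stirling_ub (n : ℕ) (hn : 1 ≤ n) :
    Stirling.stirlingSeq n ≤ Real.exp 1 / Real.sqrt 2 := by
  obtain ⟨m, rfl⟩ := Nat.exists_eq_add_of_le hn
  have := Stirling.stirlingSeq'_antitone (Nat.zero_le m)
  simpa [Nat.succ_eq_add_one, Nat.add_comm] using this

lemma stmt5_log_fact_lb (n : ℕ) (hn : 1 ≤ n) :
    1/2 * Real.log (2*π*n) + n * Real.log n - n ≤ Real.log (n.factorial) := by
  have hs : Real.sqrt π ≤ Stirling.stirlingSeq n := stmt5_stirling_lb n hn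
  have hnp : (0:ℝ) < n := by exact_mod_cast hn
  have hf := Stirling.log_stirlingSeq_formula n
  have hπ : (0:ℝ) < π := pi_pos
  have h1 : Real.log (Real.sqrt π) ≤ Real.log (Stirling.stirlingSeq n) :=
    Real.log_le_log (Real.sqrt_pos.2 hπ) hs
  rw [Real.log_sqrt hπ.le, hf] at h1
  have e1 : Real.log (2*π*n) = Real.log π + Real.log (2*n) := by
    rw [show (2*π*n : ℝ) = π * (2*n) by ring, Real.log_mul hπ.ne' (by positivity)]
  have e2 : Real.log ((n:ℝ) / Real.exp 1) = Real.log n - 1 := by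
    rw [Real.log_div hnp.ne' (Real.exp_ne_zero 1), Real.log_exp]
  rw [e2] at h1
  rw [e1]
  nlinarith [h1]

lemma stmt5_log_fact_ub (n : ℕ) (hn : 1 ≤ n) :
    Real.log (n.factorial) ≤ 1 + 1/2 * Real.log n + n * Real.log n - n := by
  have hs : Stirling.stirlingSeq n ≤ Real.exp 1 / Real.sqrt 2 := stmt5_stirling_ub n hn
  have hnp : (0:ℝ) < n := by exact_mod_cast hn
  have hpos : 0 < Stirling.stirlingSeq n := by
    unfold Stirling.stirlingSeq; positivity
  have h1 : Real.log (Stirling.stirlingSeq n) ≤ Real.log (Real.exp 1 / Real.sqrt 2) :=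
    Real.log_le_log hpos hs
  rw [Real.log_div (Real.exp_ne_zero 1) (by positivity), Real.log_exp,
    Real.log_sqrt (by norm_num)] at h1
  rw [Stirling.log_stirlingSeq_formula n] at h1
  have e2 : Real.log ((n:ℝ) / Real.exp 1) = Real.log n - 1 := by
    rw [Real.log_div hnp.ne' (Real.exp_ne_zero 1), Real.log_exp]
  have e3 : Real.log (2*(n:ℝ)) = Real.log 2 + Real.log n := Real.log_mul (by norm_num) hnp.ne'
  rw [e2, e3] at h1
  nlinarith [h1]

/-- chi-square style per-cell bound -/
lemma stmt5_chi (x m c s : ℝ) (hx : 0 < x) (hm : 0 < m) (hc : 0 < c) (hcm : c ≤ m)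
    (hs : x - m = s) :
    x * Real.log x - x * Real.log m ≤ s + s^2 / c := by
  have hl := Real.log_le_sub_one_of_pos (show 0 < x/m by positivity)
  rw [Real.log_div hx.ne' hm.ne'] at hl
  have h1 : x * Real.log x - x * Real.log m ≤ x^2/m - x := by
    have h := mul_le_mul_of_nonneg_left hl hx.le
    have hid : x * (x/m - 1) = x^2/m - x := by field_simp
    nlinarith [h]
  have h2 : x^2/m - x = s + s^2/m := by
    subst hs; field_simp; ring
  have h3 : s^2/m ≤ s^2/c := div_le_div_of_nonneg_left (sq_nonneg s) hc hcm
  linarith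

lemma stmt5_numeric : 1 + Real.log 3 + (1/2:ℝ) * Real.log (12/11) ≤ 2 * Real.log π := by
  have h11 : Real.log (12/11 : ℝ) ≤ 1/11 := by
    have := Real.log_le_sub_one_of_pos (show (0:ℝ) < 12/11 by norm_num)
    linarith
  have hexp22 : Real.exp (1/22 : ℝ) ≤ 22/21 := by
    have h : Real.exp ((1:ℝ)/22) ^ (22:ℕ) = Real.exp 1 := by
      rw [← Real.exp_nat_mul]; norm_num
    have h2 : Real.exp ((1:ℝ)/22) ^ (22:ℕ) ≤ (22/21:ℝ)^(22:ℕ) := by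
      rw [h]
      have := Real.exp_one_lt_d9
      norm_num at this ⊢
      nlinarith [this]
    exact le_of_pow_le_pow_left₀ (by norm_num) (by norm_num) h2
  have hpi := Real.pi_gt_d6
  have hkey : Real.exp (1 + 1/22 : ℝ) ≤ π^2/3 := by
    rw [Real.exp_add]
    have e1 := Real.exp_one_lt_d9
    nlinarith [hexp22, Real.exp_pos (1:ℝ), hpi, Real.pi_pos]
  have h2 : (1:ℝ) + 1/22 ≤ Real.log (π^2/3) := by
    rw [Real.le_log_iff_exp_le (by positivity)]; exact hkey
  rw [Real.log_div (by positivity) (by norm_num), Real.log_pow] at h2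
  push_cast at h2
  linarith

lemma stmt5_h_n0 (A n : ℝ) (h1 : 1 ≤ A) (h2 : A ≤ 2*n/3) : 0 < n := by nlinarith

lemma stmt5_h_K2 (A B n K : ℝ) (hn : 0 < n) (h : K ≤ A*B/(100*n)) : 100*K ≤ A*B/n := by
  rw [le_div_iff₀ hn]
  rw [le_div_iff₀ (by positivity : (0:ℝ) < 100*n)] at h
  nlinarith

lemma stmt5_h_Dmu (Δ μ K : ℝ) (hΔsq : Δ^2 = μ*K) (hΔ0 : 0 < Δ) (hμ0 : 0 < μ)
    (hK : 100*K ≤ μ) : 10*Δ ≤ μ := by nlinarith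

lemma stmt5_h_muA (A B n : ℝ) (hn0 : 0 < n) (hA0 : 0 < A) (hB' : B ≤ 2*n/3) :
    3*(A*B/n) ≤ 2*A := by
  have : A*B/n ≤ 2*A/3 := by rw [div_le_iff₀ hn0]; nlinarith
  linarith

lemma stmt5_h_q9 (A B n T μ : ℝ) (hn0 : 0 < n) (hμn : μ*n = A*B) (hμT : μ ≤ T)
    (hnA : n/3 ≤ n - A) (hnB : n/3 ≤ n - B) : n/9 ≤ n - A - B + T := by
  nlinarith [mul_le_mul hnA hnB (by linarith) (by linarith)]

lemma stmt5_h_s4 (T μ Δ K : ℝ) (hΔsq : Δ^2 = μ*K) (hΔ0 : 0 < Δ)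
    (h1 : μ + Δ ≤ T) (h2 : T ≤ μ + 2*Δ) : (T - μ)^2 ≤ 4*(μ*K) := by nlinarith

lemma stmt5_h_b4 (s μ K : ℝ) (hμ0 : 0 < μ) (hs : s^2 ≤ 4*(μ*K)) : s^2/μ ≤ 4*K := by
  rw [div_le_iff₀ hμ0]; nlinarith

lemma stmt5_h_b8 (s μ K : ℝ) (hμ0 : 0 < μ) (hs : s^2 ≤ 4*(μ*K)) : s^2/(μ/2) ≤ 8*K := by
  rw [div_le_iff₀ (by linarith : (0:ℝ) < μ/2)]; nlinarith

lemma stmt5_h_b16 (s μ K : ℝ) (hμ0 : 0 < μ) (hs : s^2 ≤ 4*(μ*K)) : s^2/(μ/4) ≤ 16*K := by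
  rw [div_le_iff₀ (by linarith : (0:ℝ) < μ/4)]; nlinarith

lemma stmt5_h_m2 (A B n μ : ℝ) (hn0 : 0 < n) (hμn : μ*n = A*B) (hA0 : 0 ≤ A)
    (hB' : 3*B ≤ 2*n) : μ/2 ≤ A*(n - B)/n := by
  rw [le_div_iff₀ hn0]; nlinarith

lemma stmt5_h_m3 (A B n μ : ℝ) (hn0 : 0 < n) (hμn : μ*n = A*B) (hB0 : 0 ≤ B)
    (hA' : 3*A ≤ 2*n) : μ/2 ≤ (n - A)*B/n := by
  rw [le_div_iff₀ hn0]; nlinarith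

lemma stmt5_h_m4 (A B n μ : ℝ) (hn0 : 0 < n) (hμn : μ*n = A*B) (hA0 : 0 ≤ A) (hB0 : 0 ≤ B)
    (hA' : 3*A ≤ 2*n) (hB' : 3*B ≤ 2*n) : μ/4 ≤ (n - A)*(n - B)/n := by
  rw [le_div_iff₀ hn0]
  nlinarith [mul_le_mul (show A ≤ 2*(n - A) by linarith) (show B ≤ 2*(n - B) by linarith)
    hB0 (by linarith : (0:ℝ) ≤ 2*(n - A))]

set_option maxHeartbeats 2000000 in
/-- pointwise lower bound for the hypergeometric probability at
`t` with `d₁d₂/N + Δ ≤ t ≤ d₁d₂/N + 2Δ`, where `Δ = √(d₁d₂K/N)`. -/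
theorem stmt5 (d₁ d₂ N : ℕ) (K : ℝ)
    (hd₁ : 1 ≤ d₁) (hd₁' : (d₁ : ℝ) ≤ 2 * N / 3)
    (hd₂ : 1 ≤ d₂) (hd₂' : (d₂ : ℝ) ≤ 2 * N / 3)
    (hK1 : 1 ≤ K) (hK2 : K ≤ (d₁ : ℝ) * d₂ / (100 * N))
    (t : ℕ)
    (ht1 : (d₁ : ℝ) * d₂ / N + Real.sqrt ((d₁ : ℝ) * d₂ * K / N) ≤ (t : ℝ))
    (ht2 : (t : ℝ) ≤ (d₁ : ℝ) * d₂ / N + 2 * Real.sqrt ((d₁ : ℝ) * d₂ * K / N)) :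
    4 * Real.exp (-40 * K) /
        Real.sqrt ((d₁ : ℝ) * d₂ / N + Real.sqrt ((d₁ : ℝ) * d₂ * K / N)) ≤
      (d₁.choose t : ℝ) * ((N - d₁).choose (d₂ - t) : ℝ) / (N.choose d₂ : ℝ) := by
  set A : ℝ := (d₁ : ℝ) with hA
  set B : ℝ := (d₂ : ℝ) with hB
  set n : ℝ := (N : ℝ) with hn
  set T : ℝ := (t : ℝ) with hT
  set μ : ℝ := A * B / n with hμ
  set Δ : ℝ := Real.sqrt (A * B * K / n) with hΔ
  clear_value A B n T μ Δ
  -- basic positivity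
  have hA1 : (1:ℝ) ≤ A := by rw [hA]; exact_mod_cast hd₁
  have hB1 : (1:ℝ) ≤ B := by rw [hB]; exact_mod_cast hd₂
  have hn0 : (0:ℝ) < n := stmt5_h_n0 A n hA1 hd₁'
  have hA0 : (0:ℝ) < A := by linarith
  have hB0 : (0:ℝ) < B := by linarith
  have hμ0 : (0:ℝ) < μ := by rw [hμ]; positivity
  have hK2' : 100 * K ≤ μ := by
    rw [hμ]; exact stmt5_h_K2 A B n K hn0 hK2
  have hμ100 : (100:ℝ) ≤ μ := by linarith
  have hΔ0 : (0:ℝ) < Δ := by rw [hΔ]; exact Real.sqrt_pos.2 (by positivity)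
  have hΔsq : Δ^2 = μ * K := by
    rw [hΔ, Real.sq_sqrt (by positivity), hμ]; ring
  have hΔμ : 10 * Δ ≤ μ := stmt5_h_Dmu Δ μ K hΔsq hΔ0 hμ0 hK2'
  have hμn : μ * n = A * B := by rw [hμ]; field_simp
  have hμA : 3 * μ ≤ 2 * A := by
    rw [hμ]; exact stmt5_h_muA A B n hn0 hA0 hd₂'
  have hμB : 3 * μ ≤ 2 * B := by
    rw [hμ, show A*B/n = B*A/n by ring]; exact stmt5_h_muA B A n hn0 hB0 hd₁'
  -- T bounds
  have hT12 : T ≤ (12/11) * (μ + Δ) := by linarith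
  have hTA : T ≤ (4/5) * A := by linarith
  have hTB : T ≤ (4/5) * B := by linarith
  have hT100 : (100:ℝ) ≤ T := by linarith
  have hAT30 : (30:ℝ) ≤ A - T := by linarith
  have hBT30 : (30:ℝ) ≤ B - T := by linarith
  have hnA : n / 3 ≤ n - A := by linarith
  have hnB : n / 3 ≤ n - B := by linarith
  have hn225 : (225:ℝ) ≤ n := by linarith
  have hμT : μ ≤ T := by linarith
  have hq9 : n / 9 ≤ n - A - B + T := stmt5_h_q9 A B n T μ hn0 hμn hμT hnA hnB
  have hq25 : (25:ℝ) ≤ n - A - B + T := by linarith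
  have hqn : n - A - B + T ≤ n := by linarith
  have hμΔ0 : (0:ℝ) < μ + Δ := by linarith
  have hnA0 : (0:ℝ) < n - A := by linarith
  have hnB0 : (0:ℝ) < n - B := by linarith
  have hs4 : (T - μ)^2 ≤ 4*(μ*K) := stmt5_h_s4 T μ Δ K hΔsq hΔ0 ht1 ht2
  have hs4' : (μ - T)^2 ≤ 4*(μ*K) := by rw [show (μ - T)^2 = (T - μ)^2 by ring]; exact hs4
  have h4K : (T - μ)^2/μ ≤ 4*K := stmt5_h_b4 (T - μ) μ K hμ0 hs4
  have h8K : (μ - T)^2/(μ/2) ≤ 8*K := stmt5_h_b8 (μ - T) μ K hμ0 hs4'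
  have h16K : (T - μ)^2/(μ/4) ≤ 16*K := stmt5_h_b16 (T - μ) μ K hμ0 hs4
  have hm2 : (0:ℝ) < A*(n - B)/n := div_pos (mul_pos hA0 hnB0) hn0
  have hm2ge : μ/2 ≤ A*(n - B)/n := stmt5_h_m2 A B n μ hn0 hμn hA0.le (by linarith)
  have hx2m : (A - T) - A*(n - B)/n = μ - T := by
    rw [hμ]; field_simp; ring
  have hm3 : (0:ℝ) < (n - A)*B/n := div_pos (mul_pos hnA0 hB0) hn0
  have hm3ge : μ/2 ≤ (n - A)*B/n := stmt5_h_m3 A B n μ hn0 hμn hB0.le (by linarith)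
  have hx3m : (B - T) - (n - A)*B/n = μ - T := by
    rw [hμ]; field_simp; ring
  have hm4 : (0:ℝ) < (n - A)*(n - B)/n := div_pos (mul_pos hnA0 hnB0) hn0
  have hm4ge : μ/4 ≤ (n - A)*(n - B)/n := stmt5_h_m4 A B n μ hn0 hμn hA0.le hB0.le (by linarith) (by linarith)
  have hx4m : (n - A - B + T) - (n - A)*(n - B)/n = T - μ := by
    rw [hμ]; field_simp; ring
  -- ℕ facts and casts
  have htd₁ : t ≤ d₁ := by
    have : (t:ℝ) ≤ (d₁:ℝ) := by rw [← hA, ← hT]; linarith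
    exact_mod_cast this
  have htd₂ : t ≤ d₂ := by
    have : (t:ℝ) ≤ (d₂:ℝ) := by rw [← hB, ← hT]; linarith
    exact_mod_cast this
  have hd₁N : d₁ ≤ N := by
    have : (d₁:ℝ) ≤ (N:ℝ) := by rw [← hA, ← hn]; linarith
    exact_mod_cast this
  have hd₂N : d₂ ≤ N := by
    have : (d₂:ℝ) ≤ (N:ℝ) := by rw [← hB, ← hn]; linarith
    exact_mod_cast this
  have hc₁ : ((d₁ - t : ℕ) : ℝ) = A - T := by
    rw [Nat.cast_sub htd₁, ← hA, ← hT]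
  have hc₂ : ((d₂ - t : ℕ) : ℝ) = B - T := by
    rw [Nat.cast_sub htd₂, ← hB, ← hT]
  have hcNA : ((N - d₁ : ℕ) : ℝ) = n - A := by
    rw [Nat.cast_sub hd₁N, ← hA, ← hn]
  have hcNB : ((N - d₂ : ℕ) : ℝ) = n - B := by
    rw [Nat.cast_sub hd₂N, ← hB, ← hn]
  have hsub : d₂ - t ≤ N - d₁ := by
    have : ((d₂ - t : ℕ):ℝ) ≤ ((N - d₁ : ℕ):ℝ) := by rw [hc₂, hcNA]; linarith
    exact_mod_cast this
  have hq'c : ((N - d₁ - (d₂ - t) : ℕ) : ℝ) = n - A - B + T := by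
    rw [Nat.cast_sub hsub, hc₂, hcNA]; ring
  -- positivity of all factorial arguments
  have h1t : 1 ≤ t := by
    have : (1:ℝ) ≤ (t:ℝ) := by rw [← hT]; linarith
    exact_mod_cast this
  have h1d₁t : 1 ≤ d₁ - t := by
    have : (1:ℝ) ≤ ((d₁ - t : ℕ):ℝ) := by rw [hc₁]; linarith
    exact_mod_cast this
  have h1d₂t : 1 ≤ d₂ - t := by
    have : (1:ℝ) ≤ ((d₂ - t : ℕ):ℝ) := by rw [hc₂]; linarith
    exact_mod_cast this
  have h1NA : 1 ≤ N - d₁ := by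
    have : (1:ℝ) ≤ ((N - d₁ : ℕ):ℝ) := by rw [hcNA]; linarith
    exact_mod_cast this
  have h1NB : 1 ≤ N - d₂ := by
    have : (1:ℝ) ≤ ((N - d₂ : ℕ):ℝ) := by rw [hcNB]; linarith
    exact_mod_cast this
  have h1q : 1 ≤ N - d₁ - (d₂ - t) := by
    have : (1:ℝ) ≤ ((N - d₁ - (d₂ - t) : ℕ):ℝ) := by rw [hq'c]; linarith
    exact_mod_cast this
  have h1N : 1 ≤ N := le_trans hd₁ hd₁N
  -- choose to factorials
  have hC1 : (d₁.choose t : ℝ) = (Nat.factorial d₁ : ℝ) / ((Nat.factorial t : ℝ) * (Nat.factorial (d₁ - t) : ℝ)) :=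
    Nat.cast_choose ℝ htd₁
  have hC2 : ((N - d₁).choose (d₂ - t) : ℝ) = (Nat.factorial (N - d₁) : ℝ) /
      ((Nat.factorial (d₂ - t) : ℝ) * (Nat.factorial (N - d₁ - (d₂ - t)) : ℝ)) :=
    Nat.cast_choose ℝ hsub
  have hC3 : (N.choose d₂ : ℝ) = (Nat.factorial N : ℝ) / ((Nat.factorial d₂ : ℝ) * (Nat.factorial (N - d₂) : ℝ)) :=
    Nat.cast_choose ℝ hd₂N
  have hch1 : 0 < (d₁.choose t : ℝ) := by exact_mod_cast Nat.choose_pos htd₁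
  have hch2 : 0 < ((N - d₁).choose (d₂ - t) : ℝ) := by exact_mod_cast Nat.choose_pos hsub
  have hch3 : 0 < (N.choose d₂ : ℝ) := by exact_mod_cast Nat.choose_pos hd₂N
  have hPpos : 0 < (d₁.choose t : ℝ) * ((N - d₁).choose (d₂ - t) : ℝ) / (N.choose d₂ : ℝ) :=
    div_pos (mul_pos hch1 hch2) hch3
  have hfac : ∀ m : ℕ, (0:ℝ) < (Nat.factorial m : ℝ) := fun m => by exact_mod_cast m.factorial_pos
  have hlogP : Real.log ((d₁.choose t : ℝ) * ((N - d₁).choose (d₂ - t) : ℝ) / (N.choose d₂ : ℝ)) =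
      Real.log (Nat.factorial d₁ : ℝ) - Real.log (Nat.factorial t : ℝ) - Real.log (Nat.factorial (d₁ - t) : ℝ)
      + Real.log (Nat.factorial (N - d₁) : ℝ) - Real.log (Nat.factorial (d₂ - t) : ℝ)
      - Real.log (Nat.factorial (N - d₁ - (d₂ - t)) : ℝ)
      - Real.log (Nat.factorial N : ℝ) + Real.log (Nat.factorial d₂ : ℝ) + Real.log (Nat.factorial (N - d₂) : ℝ) := by
    rw [Real.log_div (mul_pos hch1 hch2).ne' hch3.ne', Real.log_mul hch1.ne' hch2.ne',
        hC1, hC2, hC3,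
        Real.log_div (hfac d₁).ne' (mul_pos (hfac t) (hfac (d₁ - t))).ne',
        Real.log_mul (hfac t).ne' (hfac (d₁ - t)).ne',
        Real.log_div (hfac (N - d₁)).ne' (mul_pos (hfac (d₂ - t)) (hfac (N - d₁ - (d₂ - t)))).ne',
        Real.log_mul (hfac (d₂ - t)).ne' (hfac (N - d₁ - (d₂ - t))).ne',
        Real.log_div (hfac N).ne' (mul_pos (hfac d₂) (hfac (N - d₂))).ne',
        Real.log_mul (hfac d₂).ne' (hfac (N - d₂)).ne']
    ring
  -- Stirling bounds on the nine factorials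
  have hS1 := stmt5_log_fact_lb d₁ hd₁
  rw [← hA] at hS1
  have hS2 := stmt5_log_fact_lb (N - d₁) h1NA
  rw [hcNA] at hS2
  have hS3 := stmt5_log_fact_lb d₂ hd₂
  rw [← hB] at hS3
  have hS4 := stmt5_log_fact_lb (N - d₂) h1NB
  rw [hcNB] at hS4
  have hU1 := stmt5_log_fact_ub t h1t
  rw [← hT] at hU1
  have hU2 := stmt5_log_fact_ub (d₁ - t) h1d₁t
  rw [hc₁] at hU2
  have hU3 := stmt5_log_fact_ub (d₂ - t) h1d₂t
  rw [hc₂] at hU3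
  have hU4 := stmt5_log_fact_ub (N - d₁ - (d₂ - t)) h1q
  rw [hq'c] at hU4
  have hU5 := stmt5_log_fact_ub N h1N
  rw [← hn] at hU5
  -- log expansions
  have hE1 : Real.log (2*π*A) = Real.log 2 + Real.log π + Real.log A := by
    rw [Real.log_mul (by positivity) (by linarith), Real.log_mul two_ne_zero (ne_of_gt pi_pos)]
  have hE2 : Real.log (2*π*(n - A)) = Real.log 2 + Real.log π + Real.log (n - A) := by
    rw [Real.log_mul (by positivity) (by linarith), Real.log_mul two_ne_zero (ne_of_gt pi_pos)]
  have hE3 : Real.log (2*π*B) = Real.log 2 + Real.log π + Real.log B := by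
    rw [Real.log_mul (by positivity) (by linarith), Real.log_mul two_ne_zero (ne_of_gt pi_pos)]
  have hE4 : Real.log (2*π*(n - B)) = Real.log 2 + Real.log π + Real.log (n - B) := by
    rw [Real.log_mul (by positivity) (by linarith), Real.log_mul two_ne_zero (ne_of_gt pi_pos)]
  -- comparisons of single logs
  have hL1 : Real.log n - Real.log 3 ≤ Real.log (n - A) := by
    have h := Real.log_le_log (show (0:ℝ) < n/3 by positivity) hnA
    rw [Real.log_div hn0.ne' (by norm_num : (3:ℝ) ≠ 0)] at h
    linarith
  have hL2 : Real.log n - Real.log 3 ≤ Real.log (n - B) := by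
    have h := Real.log_le_log (show (0:ℝ) < n/3 by positivity) hnB
    rw [Real.log_div hn0.ne' (by norm_num : (3:ℝ) ≠ 0)] at h
    linarith
  have hL3 : Real.log (A - T) ≤ Real.log A := Real.log_le_log (by linarith) (by linarith)
  have hL4 : Real.log (B - T) ≤ Real.log B := Real.log_le_log (by linarith) (by linarith)
  have hL5 : Real.log (n - A - B + T) ≤ Real.log n := Real.log_le_log (by linarith) hqn
  have hL6 : Real.log T ≤ Real.log (12/11) + Real.log (μ + Δ) := by
    have h := Real.log_le_log (by linarith : (0:ℝ) < T) hT12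
    rw [Real.log_mul (by norm_num) hμΔ0.ne'] at h
    linarith
  -- chi-square cell bounds
  have hEμ : Real.log μ = Real.log A + Real.log B - Real.log n := by
    rw [hμ, Real.log_div (by positivity) hn0.ne', Real.log_mul hA0.ne' hB0.ne']
  have hcell1 : T * Real.log T - T * (Real.log A + Real.log B - Real.log n) ≤ (T - μ) + 4*K := by
    have h := stmt5_chi T μ μ (T - μ) (by linarith) hμ0 hμ0 le_rfl rfl
    rw [hEμ] at h
    linarith [h4K]
  have hEm2 : Real.log (A*(n - B)/n) = Real.log A + Real.log (n - B) - Real.log n := by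
    rw [Real.log_div (mul_pos hA0 hnB0).ne' hn0.ne', Real.log_mul hA0.ne' hnB0.ne']
  have hcell2 : (A - T) * Real.log (A - T) - (A - T) * (Real.log A + Real.log (n - B) - Real.log n)
      ≤ (μ - T) + 8*K := by
    have h := stmt5_chi (A - T) (A*(n - B)/n) (μ/2) (μ - T) (by linarith) hm2 (by linarith) hm2ge hx2m
    rw [hEm2] at h
    linarith [h8K]
  have hEm3 : Real.log ((n - A)*B/n) = Real.log (n - A) + Real.log B - Real.log n := by
    rw [Real.log_div (mul_pos hnA0 hB0).ne' hn0.ne', Real.log_mul hnA0.ne' hB0.ne']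
  have hcell3 : (B - T) * Real.log (B - T) - (B - T) * (Real.log (n - A) + Real.log B - Real.log n)
      ≤ (μ - T) + 8*K := by
    have h := stmt5_chi (B - T) ((n - A)*B/n) (μ/2) (μ - T) (by linarith) hm3 (by linarith) hm3ge hx3m
    rw [hEm3] at h
    linarith [h8K]
  have hEm4 : Real.log ((n - A)*(n - B)/n) = Real.log (n - A) + Real.log (n - B) - Real.log n := by
    rw [Real.log_div (mul_pos hnA0 hnB0).ne' hn0.ne', Real.log_mul hnA0.ne' hnB0.ne']
  have hcell4 : (n - A - B + T) * Real.log (n - A - B + T)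
      - (n - A - B + T) * (Real.log (n - A) + Real.log (n - B) - Real.log n)
      ≤ (T - μ) + 16*K := by
    have h := stmt5_chi (n - A - B + T) ((n - A)*(n - B)/n) (μ/4) (T - μ) (by linarith) hm4
      (by linarith) hm4ge hx4m
    rw [hEm4] at h
    linarith [h16K]
  -- final assembly
  have hnum := stmt5_numeric
  have hmain : 2*Real.log 2 + (-40*K) - 1/2*Real.log (μ + Δ) ≤
      Real.log ((d₁.choose t : ℝ) * ((N - d₁).choose (d₂ - t) : ℝ) / (N.choose d₂ : ℝ)) := by
    rw [hlogP]
    linarith only [hS1, hS2, hS3, hS4, hU1, hU2, hU3, hU4, hU5, hE1, hE2, hE3, hE4,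
      hL1, hL2, hL3, hL4, hL5, hL6, hcell1, hcell2, hcell3, hcell4, hnum, hK1]
  calc 4 * Real.exp (-40 * K) / Real.sqrt (μ + Δ)
      = Real.exp (2*Real.log 2 + (-40*K) - 1/2*Real.log (μ + Δ)) := by
        rw [Real.exp_sub, Real.exp_add]
        rw [show Real.exp (2*Real.log 2) = 4 from by
          rw [show (2:ℝ)*Real.log 2 = Real.log 4 from by
            rw [show (4:ℝ) = 2^2 by norm_num, Real.log_pow]; push_cast; ring]
          exact Real.exp_log (by norm_num)]
        rw [show Real.exp (1/2*Real.log (μ + Δ)) = Real.sqrt (μ + Δ) from by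
          rw [show (1/2:ℝ)*Real.log (μ + Δ) = Real.log (Real.sqrt (μ + Δ)) from by
            rw [Real.log_sqrt hμΔ0.le]; ring]
          exact Real.exp_log (Real.sqrt_pos.2 hμΔ0)]
    _ ≤ Real.exp (Real.log ((d₁.choose t : ℝ) * ((N - d₁).choose (d₂ - t) : ℝ) / (N.choose d₂ : ℝ))) :=
        Real.exp_le_exp.2 hmain
    _ = _ := Real.exp_log hPpos
end

section
/- Fix an integer k ≥ 2 and set N = C(n − ⌊n/k⌋, k − 1). Let p = p(n) and q = q(n) satisfy 0 < p ≤ q ≤ 1/2, N·p(n) → ∞ as n → ∞, and p q N ≤ (1/30) log n; set γ = (log n)/(p q N) and assume p N < (log n)/(5 log γ). Let B be a finite set and let N₁, …, N_s ⊆ B be s ≥ n^{1/3} pairwise disjoint subsets, each of size m(n) with m(n)/(N p) → 1 as n → ∞. Let B_q be the random subset of B obtained by including each element of B independently with probability q. Then for every fixed s' > 0, for all sufficiently large n, with probability at least 1 − n^{−s'} there exists an index i with N_i ⊆ B_q. -/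
open MeasureTheory Finset Filter

/-- Bernoulli measure on `Bool` with success probability `p`. -/
noncomputable def bern (p : ℝ) : Measure Bool :=
  ENNReal.ofReal p • Measure.dirac true + ENNReal.ofReal (1 - p) • Measure.dirac false

/-- `N = C(n - ⌊n/k⌋, k - 1)`. -/
def Nk (k n : ℕ) : ℕ := (n - n / k).choose (k - 1)

lemma bern_singleton (q : ℝ) (b : Bool) :
    bern q {b} = ENNReal.ofReal (if b then q else 1 - q) := by
  cases b <;> simp [bern, Measure.dirac_apply]

instance bern_fin (q : ℝ) : IsFiniteMeasure (bern q) := by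
  constructor
  simp only [bern, Measure.add_apply, Measure.smul_apply, Measure.dirac_apply, smul_eq_mul]
  simp [ENNReal.add_lt_top]

lemma meas_finset (q : ℝ) (h0 : 0 ≤ q) (h1 : q ≤ 1) {M : ℕ} (S : Finset (Fin M → Bool)) :
    (Measure.pi fun _ : Fin M => bern q) ↑S =
      ENNReal.ofReal (∑ ω ∈ S, ∏ x, (if ω x then q else 1 - q)) := by
  have hnn : ∀ b : Bool, 0 ≤ (if b then q else 1 - q) := by
    intro b; cases b <;> simp [h0]; linarith
  have hsingle : ∀ ω : Fin M → Bool,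
      (Measure.pi fun _ : Fin M => bern q) {ω}
        = ENNReal.ofReal (∏ x, (if ω x then q else 1 - q)) := by
    intro ω
    rw [← Set.univ_pi_singleton ω, Measure.pi_pi]
    rw [ENNReal.ofReal_prod_of_nonneg (fun x _ => hnn (ω x))]
    exact Finset.prod_congr rfl fun x _ => bern_singleton q (ω x)
  have : (↑S : Set (Fin M → Bool)) = ⋃ ω ∈ S, {ω} := (Set.biUnion_of_singleton _).symm
  rw [this, measure_biUnion_finset ?_ (fun ω _ => measurableSet_singleton ω)]
  · rw [ENNReal.ofReal_sum_of_nonneg (fun ω _ => Finset.prod_nonneg fun x _ => hnn (ω x))]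
    exact Finset.sum_congr rfl fun ω _ => hsingle ω
  · intro a _ b _ hab
    simp [Function.onFun, Set.disjoint_singleton, hab]

lemma bern_prob (q : ℝ) (h0 : 0 ≤ q) (h1 : q ≤ 1) : IsProbabilityMeasure (bern q) := by
  constructor
  simp only [bern, Measure.add_apply, Measure.smul_apply, Measure.dirac_apply, smul_eq_mul]
  simp [← ENNReal.ofReal_add h0 (by linarith : (0:ℝ) ≤ 1 - q)]

-- inner sum lemma
lemma hinner {ι : Type*} [Fintype ι] [DecidableEq ι] (q : ℝ) (B : Finset ι) :
    ∑ ω : ι → Bool, (if ∀ x ∈ B, ω x = true then (1:ℝ) else 0) *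
      ∏ x, (if ω x then q else 1 - q) = q ^ B.card := by
  classical
  have h1 : ∀ ω : ι → Bool,
      (if ∀ x ∈ B, ω x = true then (1:ℝ) else 0) * ∏ x, (if ω x then q else 1 - q)
        = ∏ x, ((if x ∈ B then (if ω x then (1:ℝ) else 0) else 1) *
            (if ω x then q else 1 - q)) := by
    intro ω
    rw [Finset.prod_mul_distrib]
    congr 1
    by_cases h : ∀ x ∈ B, ω x = true
    · rw [if_pos h]
      exact (Finset.prod_eq_one fun x _ => by
        by_cases hx : x ∈ B <;> simp [hx, h x]).symm
    · rw [if_neg h]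
      push_neg at h
      obtain ⟨x, hxB, hx⟩ := h
      exact (Finset.prod_eq_zero (Finset.mem_univ x) (by simp [hxB, hx])).symm
  rw [Finset.sum_congr rfl (fun ω _ => h1 ω)]
  have h2 : ∑ ω : ι → Bool, ∏ x, ((if x ∈ B then (if ω x then (1:ℝ) else 0) else 1) *
      (if ω x then q else 1 - q))
      = ∏ x : ι, ∑ b : Bool, ((if x ∈ B then (if b then (1:ℝ) else 0) else 1) *
      (if b then q else 1 - q)) := by
    rw [Finset.prod_univ_sum (fun _ => (Finset.univ : Finset Bool))]
    rw [Fintype.piFinset_univ]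
  rw [h2]
  have h3 : ∀ x : ι, (∑ b : Bool, ((if x ∈ B then (if b then (1:ℝ) else 0) else 1) *
      (if b then q else 1 - q))) = if x ∈ B then q else 1 := by
    intro x
    rw [Fintype.sum_bool]
    by_cases hx : x ∈ B <;> simp [hx] <;> ring
  rw [Finset.prod_congr rfl fun x _ => h3 x, Finset.prod_ite_mem, Finset.univ_inter,
    Finset.prod_const]

lemma key {ι κ : Type*} [Fintype ι] [DecidableEq ι] [Fintype κ] [DecidableEq κ]
    (A : κ → Finset ι) (hd : ∀ i j : κ, i ≠ j → Disjoint (A i) (A j)) (q : ℝ) :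
    ∑ ω : ι → Bool, (if (∀ i, ¬ ∀ x ∈ A i, ω x = true) then (1:ℝ) else 0) *
        ∏ x, (if ω x then q else 1 - q)
      = ∏ i : κ, (1 - q ^ (A i).card) := by
  classical
  -- indicator as product
  have hχ : ∀ ω : ι → Bool, (if (∀ i, ¬ ∀ x ∈ A i, ω x = true) then (1:ℝ) else 0)
      = ∏ i : κ, ((- if ∀ x ∈ A i, ω x = true then (1:ℝ) else 0) + 1) := by
    intro ω
    by_cases h : ∀ i, ¬ ∀ x ∈ A i, ω x = true
    · rw [if_pos h]
      exact (Finset.prod_eq_one fun i _ => by rw [if_neg (h i)]; ring).symm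
    · rw [if_neg h]
      push_neg at h
      obtain ⟨i, hi⟩ := h
      exact (Finset.prod_eq_zero (Finset.mem_univ i) (by rw [if_pos hi]; ring)).symm
  simp only [hχ]
  -- expand both products via prod_add
  rw [Finset.sum_congr rfl (fun ω _ => by
    rw [Finset.prod_add, Finset.sum_mul])]
  rw [Finset.sum_comm]
  have hRHS : ∀ i : κ, (1:ℝ) - q ^ (A i).card = (- q ^ (A i).card) + 1 := fun i => by ring
  rw [Finset.prod_congr rfl fun i _ => hRHS i, Finset.prod_add]
  refine Finset.sum_congr rfl fun t _ => ?_
  simp only [Finset.prod_const_one, mul_one]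
  -- prod of indicators over t equals indicator of biUnion
  have hprod : ∀ ω : ι → Bool,
      (∏ i ∈ t, (- if ∀ x ∈ A i, ω x = true then (1:ℝ) else 0))
        = (-1) ^ t.card * (if ∀ x ∈ t.biUnion A, ω x = true then (1:ℝ) else 0) := by
    intro ω
    have : ∀ i ∈ t, (- if ∀ x ∈ A i, ω x = true then (1:ℝ) else 0)
        = (-1) * (if ∀ x ∈ A i, ω x = true then (1:ℝ) else 0) := fun i _ => by ring
    rw [Finset.prod_congr rfl this, Finset.prod_mul_distrib, Finset.prod_const]
    congr 1
    by_cases h : ∀ x ∈ t.biUnion A, ω x = true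
    · rw [if_pos h]
      exact Finset.prod_eq_one fun i hi =>
        if_pos fun x hx => h x (Finset.mem_biUnion.2 ⟨i, hi, hx⟩)
    · rw [if_neg h]
      push_neg at h
      obtain ⟨x, hx, hfx⟩ := h
      obtain ⟨i, hi, hxi⟩ := Finset.mem_biUnion.1 hx
      refine Finset.prod_eq_zero hi ?_
      rw [if_neg]
      intro hall
      exact hfx (hall x hxi)
  calc ∑ ω : ι → Bool, (∏ i ∈ t, (- if ∀ x ∈ A i, ω x = true then (1:ℝ) else 0)) *
          ∏ x, (if ω x then q else 1 - q)
      = (-1) ^ t.card * ∑ ω : ι → Bool,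
          (if ∀ x ∈ t.biUnion A, ω x = true then (1:ℝ) else 0) *
          ∏ x, (if ω x then q else 1 - q) := by
        rw [Finset.mul_sum]
        exact Finset.sum_congr rfl fun ω _ => by rw [hprod ω, mul_assoc]
    _ = (-1) ^ t.card * q ^ (t.biUnion A).card := by rw [hinner]
    _ = ∏ i ∈ t, (- q ^ (A i).card) := by
        rw [Finset.card_biUnion (fun i hi j hj hij => hd i j hij)]
        rw [← Finset.prod_pow_eq_pow_sum]
        rw [← Finset.prod_const, ← Finset.prod_mul_distrib]
        exact Finset.prod_congr rfl fun i _ => by ring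


lemma main_prob (q : ℝ) (h0 : 0 ≤ q) (h1 : q ≤ 1) {M sn : ℕ} (A : Fin sn → Finset (Fin M))
    (hd : ∀ i j : Fin sn, i ≠ j → Disjoint (A i) (A j)) (mn : ℕ) (hc : ∀ i, (A i).card = mn) :
    (Measure.pi fun _ : Fin M => bern q) {ω | ∃ i, ∀ x ∈ A i, ω x = true}
      = 1 - ENNReal.ofReal ((1 - q ^ mn) ^ sn) := by
  classical
  haveI := bern_prob q h0 h1
  set μ := Measure.pi fun _ : Fin M => bern q with hμ
  haveI : IsProbabilityMeasure μ := by infer_instance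
  set S : Finset (Fin M → Bool) :=
    Finset.univ.filter (fun ω => ∀ i, ¬ ∀ x ∈ A i, ω x = true) with hS
  have hFmeas : MeasurableSet (↑S : Set (Fin M → Bool)) := S.measurableSet
  have hcompl : {ω : Fin M → Bool | ∃ i, ∀ x ∈ A i, ω x = true} = (↑S)ᶜ := by
    ext ω; simp [hS]
  rw [hcompl, prob_compl_eq_one_sub hFmeas]
  congr 1
  rw [meas_finset q h0 h1 S]
  congr 1
  rw [Finset.sum_filter]
  have halign : (∑ a : Fin M → Bool,
      if (∀ i, ¬ ∀ x ∈ A i, a x = true) then ∏ x, (if a x then q else 1 - q) else 0)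
      = ∑ a : Fin M → Bool, (if (∀ i, ¬ ∀ x ∈ A i, a x = true) then (1:ℝ) else 0) *
          ∏ x, (if a x then q else 1 - q) :=
    Finset.sum_congr rfl fun ω _ => by
      by_cases h : (∀ i, ¬ ∀ x ∈ A i, ω x = true) <;> simp [h]
  rw [halign]
  have hkey := key A hd q
  rw [Finset.prod_congr rfl fun i (_ : i ∈ Finset.univ) => by rw [hc i],
    Finset.prod_const, Finset.card_univ, Fintype.card_fin] at hkey
  refine Eq.trans ?_ hkey
  exact Finset.sum_congr rfl fun ω _ => by
    by_cases h : (∀ i, ¬ ∀ x ∈ A i, ω x = true) <;> simp [h]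


set_option maxHeartbeats 1000000 in
/-- STATEMENT 6: the sparse intersection lemma, case (2).
The ground set `B` is modelled as `Fin (M n)` and `B_q` as the random subset
given by the product Bernoulli measure with parameter `q n`. -/
theorem stmt7 (k : ℕ) (hk : 2 ≤ k) (p q : ℕ → ℝ)
    (hp : ∀ n, 0 < p n) (hpq : ∀ n, p n ≤ q n) (hq : ∀ n, q n ≤ 1 / 2)
    (hpN : Tendsto (fun n => (Nk k n : ℝ) * p n) atTop atTop)
    (hsparse : ∀ᶠ n : ℕ in atTop, p n * q n * (Nk k n : ℝ) ≤ (1 / 30) * Real.log n)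
    (hcase : ∀ᶠ n : ℕ in atTop,
      p n * (Nk k n : ℝ) <
        Real.log n / (5 * Real.log (Real.log n / (p n * q n * (Nk k n : ℝ)))))
    (M s : ℕ → ℕ) (hs : ∀ n : ℕ, ((n : ℝ)) ^ ((1 : ℝ) / 3) ≤ (s n : ℝ))
    (Ni : (n : ℕ) → Fin (s n) → Finset (Fin (M n)))
    (hdisj : ∀ n, ∀ i j : Fin (s n), i ≠ j → Disjoint (Ni n i) (Ni n j))
    (m : ℕ → ℕ) (hcard : ∀ n, ∀ i : Fin (s n), (Ni n i).card = m n)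
    (hm : Tendsto (fun n => (m n : ℝ) / ((Nk k n : ℝ) * p n)) atTop (nhds 1)) :
    ∀ s' : ℝ, 0 < s' →
      ∀ᶠ n : ℕ in atTop,
        ENNReal.ofReal (1 - (n : ℝ) ^ (-s')) ≤
          (Measure.pi fun _ : Fin (M n) => bern (q n))
            {ω | ∃ i : Fin (s n), ∀ x ∈ Ni n i, ω x = true} := by
  intro s' hs'
  have hE4 : ∀ᶠ n : ℕ in atTop, (1:ℝ) ≤ (Nk k n : ℝ) * p n := hpN.eventually_ge_atTop 1
  have hE5 : ∀ᶠ n : ℕ in atTop, (m n : ℝ) / ((Nk k n : ℝ) * p n) < 3/2 :=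
    hm.eventually_lt_const (by norm_num)
  have hE6 : ∀ᶠ n : ℕ in atTop, s' * Real.log n ≤ (n:ℝ) ^ ((1:ℝ)/30) := by
    have h := (isLittleO_log_rpow_atTop (by norm_num : (0:ℝ) < 1/30)).bound
      (by positivity : (0:ℝ) < 1/s')
    have h2 := tendsto_natCast_atTop_atTop (R := ℝ) |>.eventually h
    filter_upwards [h2, eventually_ge_atTop 1] with n hn hn1
    have hn1' : (1:ℝ) ≤ (n:ℝ) := by exact_mod_cast hn1
    have hlog : 0 ≤ Real.log n := Real.log_nonneg hn1'
    have hnorm : Real.log n ≤ (1/s') * (n:ℝ) ^ ((1:ℝ)/30) := by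
      have := hn
      rwa [Real.norm_eq_abs, Real.norm_eq_abs, abs_of_nonneg hlog,
        abs_of_nonneg (Real.rpow_nonneg (by linarith) _)] at this
    calc s' * Real.log n ≤ s' * ((1/s') * (n:ℝ) ^ ((1:ℝ)/30)) := by
          exact mul_le_mul_of_nonneg_left hnorm (le_of_lt hs')
      _ = (n:ℝ) ^ ((1:ℝ)/30) := by field_simp
  filter_upwards [hsparse, hcase, hE4, hE5, hE6, eventually_ge_atTop 3] with n h1 h2 h4 h5 h6 h3
  -- abbreviations
  set P := p n with hP
  set Q := q n with hQ
  set N := (Nk k n : ℝ) with hN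
  set L := Real.log n with hL
  have hn3 : (3:ℝ) ≤ (n:ℝ) := by exact_mod_cast h3
  have hn0 : (0:ℝ) < n := by linarith
  have hn1 : (1:ℝ) ≤ (n:ℝ) := by linarith
  have hL1 : 1 ≤ L := by
    rw [hL, show (1:ℝ) = Real.log (Real.exp 1) by rw [Real.log_exp]]
    exact Real.log_le_log (Real.exp_pos 1) (le_trans (le_of_lt Real.exp_one_lt_d9) (by linarith))
  have hP0 : 0 < P := hp n
  have hQ0 : 0 < Q := lt_of_lt_of_le hP0 (hpq n)
  have hQhalf : Q ≤ 1/2 := hq n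
  have hQ1 : Q ≤ 1 := by linarith
  have hNP : (1:ℝ) ≤ N * P := h4
  have hN0 : 0 < N := by nlinarith
  have hPQN : 0 < P * Q * N := by positivity
  set γ := L / (P * Q * N) with hγ
  have hγ30 : (30:ℝ) ≤ γ := by
    rw [hγ, le_div_iff₀ hPQN]
    linarith [h1]
  have hγ0 : 0 < γ := by linarith
  have hlogγ1 : 1 ≤ Real.log γ := by
    rw [show (1:ℝ) = Real.log (Real.exp 1) by rw [Real.log_exp]]
    exact Real.log_le_log (Real.exp_pos 1) (le_trans (le_of_lt Real.exp_one_lt_d9) (by linarith))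
  have hlogγ0 : 0 < Real.log γ := by linarith
  have hPN : P * N < L / (5 * Real.log γ) := h2
  -- Step 1 : 1/Q ≤ γ, so -log Q ≤ log γ
  have hinvQ : 1 / Q ≤ γ := by
    have hge : γ * (P * Q * N) = L := by
      rw [hγ]; field_simp
    have h1Q : 1 / Q = γ * (P * N) / L := by
      rw [← hge]; field_simp
    rw [h1Q]
    rw [div_le_iff₀ (by linarith : (0:ℝ) < L)]
    calc γ * (P * N) ≤ γ * (L / (5 * Real.log γ)) := by
          exact mul_le_mul_of_nonneg_left (le_of_lt hPN) (le_of_lt hγ0)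
      _ ≤ γ * L := by
          have : L / (5 * Real.log γ) ≤ L := by
            rw [div_le_iff₀ (by positivity)]
            nlinarith
          exact mul_le_mul_of_nonneg_left this (le_of_lt hγ0)
      _ = γ * L := rfl
  have hlogQ : -Real.log Q ≤ Real.log γ := by
    rw [← Real.log_inv]
    rw [show Q⁻¹ = 1/Q by ring]
    exact Real.log_le_log (by positivity) hinvQ
  have hlogQ0 : 0 ≤ -Real.log Q := by
    have : Real.log Q ≤ Real.log 1 := Real.log_le_log hQ0 (by linarith)
    simp at this; linarith
  -- Step 2 : m ≤ (3/2) N P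
  have hm32 : (m n : ℝ) ≤ (3/2) * (N * P) := by
    have := h5
    rw [div_lt_iff₀ (by linarith : (0:ℝ) < N * P)] at this
    linarith
  -- Step 3 : m * (-log Q) ≤ (3/10) L
  have hstep3 : (m n : ℝ) * (-Real.log Q) ≤ (3/10) * L := by
    calc (m n : ℝ) * (-Real.log Q) ≤ ((3/2) * (N * P)) * Real.log γ := by
          exact mul_le_mul hm32 hlogQ hlogQ0 (by positivity)
      _ ≤ (3/2) * (L / (5 * Real.log γ)) * Real.log γ := by
          have := mul_le_mul_of_nonneg_right
            (mul_le_mul_of_nonneg_left (le_of_lt hPN) (by norm_num : (0:ℝ) ≤ 3/2))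
            (le_of_lt hlogγ0)
          calc (3/2) * (N * P) * Real.log γ = (3/2) * (P * N) * Real.log γ := by ring
            _ ≤ (3/2) * (L / (5 * Real.log γ)) * Real.log γ := this
      _ = (3/10) * L := by field_simp; ring
  -- Step 4 : Q^m ≥ n^(-3/10)
  have hQm0 : 0 < Q ^ (m n) := pow_pos hQ0 _
  have hstep4 : (n:ℝ) ^ (-(3:ℝ)/10) ≤ Q ^ (m n) := by
    rw [Real.rpow_def_of_pos hn0, ← Real.exp_log hQm0, Real.log_pow]
    apply Real.exp_le_exp.2
    have : -((m n : ℝ) * (-Real.log Q)) = (m n : ℝ) * Real.log Q := by ring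
    calc Real.log n * (-(3:ℝ)/10) = -((3/10) * L) := by rw [hL]; ring
      _ ≤ -((m n : ℝ) * (-Real.log Q)) := by linarith
      _ = (m n : ℝ) * Real.log Q := this
  -- Step 5 : (1 - Q^m)^s ≤ n^(-s')
  have hQm1 : Q ^ (m n) ≤ 1 := pow_le_one₀ (le_of_lt hQ0) hQ1
  have hsQm : s' * L ≤ (s n : ℝ) * Q ^ (m n) := by
    calc s' * L ≤ (n:ℝ) ^ ((1:ℝ)/30) := h6
      _ = (n:ℝ) ^ ((1:ℝ)/3) * (n:ℝ) ^ (-(3:ℝ)/10) := by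
          rw [← Real.rpow_add hn0]; norm_num
      _ ≤ (s n : ℝ) * Q ^ (m n) := by
          exact mul_le_mul (hs n) hstep4 (Real.rpow_nonneg (le_of_lt hn0) _)
            (le_trans (Real.rpow_nonneg (le_of_lt hn0) _) (hs n))
  have hfail : (1 - Q ^ (m n)) ^ (s n) ≤ (n:ℝ) ^ (-s') := by
    calc (1 - Q ^ (m n)) ^ (s n) ≤ (Real.exp (-(Q ^ (m n)))) ^ (s n) := by
          apply pow_le_pow_left₀ (by linarith)
          linarith [Real.add_one_le_exp (-(Q ^ (m n)))]
      _ = Real.exp ((s n : ℝ) * (-(Q ^ (m n)))) := (Real.exp_nat_mul _ _).symm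
      _ ≤ Real.exp (-(s' * L)) := by
          apply Real.exp_le_exp.2; linarith [hsQm]
      _ = (n:ℝ) ^ (-s') := by
          rw [Real.rpow_def_of_pos hn0, hL]; ring_nf
  -- Step 6 : conclude
  rw [main_prob Q (le_of_lt hQ0) hQ1 (Ni n) (hdisj n) (m n) (hcard n)]
  have hns'0 : 0 ≤ (n:ℝ) ^ (-s') := Real.rpow_nonneg (le_of_lt hn0) _
  rw [ENNReal.ofReal_sub 1 hns'0, ENNReal.ofReal_one]
  exact tsub_le_tsub_left (ENNReal.ofReal_le_ofReal hfail) 1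
end

section
/- Fix integers n ≥ k ≥ 2 and reals 0 < p ≤ q ≤ 1 with p q·C(n,k) ≤ 4·n·log n. Set γ' = 4e·(n·log n)/(p q·C(n,k)) and λ = 4e²·(n·log n)/(log γ'). Let G ~ H^{(k)}(n,p) and H ~ H^{(k)}(n,q) be independent. Then for all sufficiently large n, with probability at least 1 − e^{−n/2}, one has discP(G,H) ≤ λ. -/
open MeasureTheory Finset Filter

/-- Product Bernoulli measure on subsets of `Finset (Fin n)` (indicator functions),
modelling the random hypergraph `H^{(k)}(n, p)`. -/
noncomputable def hypMeasure (n : ℕ) (p : ℝ) : Measure (Finset (Fin n) → Bool) :=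
  Measure.pi fun _ => bern p

/-- The edge set of the `k`-uniform hypergraph determined by the outcome `ω`. -/
def edgesOf (n k : ℕ) (ω : Finset (Fin n) → Bool) : Finset (Finset (Fin n)) :=
  Finset.univ.filter fun s => s.card = k ∧ ω s = true

/-- `e(G_π ∩ H)`, the number of common edges of `G` permuted by `π` and `H`. -/
def overlap (n : ℕ) (G H : Finset (Finset (Fin n))) (π : Equiv.Perm (Fin n)) : ℕ :=
  ((G.image fun e => e.image π) ∩ H).card

/-- The relative discrepancy `disc(G, H)`. -/
noncomputable def disc (n k : ℕ) (G H : Finset (Finset (Fin n))) : ℝ :=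
  Finset.univ.sup' Finset.univ_nonempty fun π : Equiv.Perm (Fin n) =>
    |(overlap n G H π : ℝ) -
      ((G.card : ℝ) / (n.choose k)) * ((H.card : ℝ) / (n.choose k)) * (n.choose k)|

/-- The probabilistic discrepancy `discP(G, H)`. -/
noncomputable def discP (n k : ℕ) (p q : ℝ) (G H : Finset (Finset (Fin n))) : ℝ :=
  Finset.univ.sup' Finset.univ_nonempty fun π : Equiv.Perm (Fin n) =>
    |(overlap n G H π : ℝ) - p * q * (n.choose k)|

set_option maxHeartbeats 1000000
open scoped ENNReal

lemma bern_isProb {p : ℝ} (h0 : 0 ≤ p) (h1 : p ≤ 1) : IsProbabilityMeasure (bern p) := by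
  constructor
  simp only [bern, Measure.add_apply, Measure.smul_apply, smul_eq_mul, measure_univ, mul_one]
  rw [← ENNReal.ofReal_add h0 (by linarith)]
  norm_num

lemma bern_true {p : ℝ} : bern p {true} = ENNReal.ofReal p := by
  simp [bern, Measure.dirac_apply]

lemma hyp_isProb (n : ℕ) {p : ℝ} (h0 : 0 ≤ p) (h1 : p ≤ 1) :
    IsProbabilityMeasure (hypMeasure n p) := by
  haveI := bern_isProb h0 h1
  rw [hypMeasure]; infer_instance

lemma hyp_cylinder (n : ℕ) {p : ℝ} (h0 : 0 ≤ p) (h1 : p ≤ 1) (T : Finset (Finset (Fin n))) :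
    hypMeasure n p {ω | ∀ t ∈ T, ω t = true} = ENNReal.ofReal p ^ T.card := by
  haveI := bern_isProb h0 h1
  have hset : {ω : Finset (Fin n) → Bool | ∀ t ∈ T, ω t = true} =
      Set.pi Set.univ (fun t => if t ∈ T then ({true} : Set Bool) else Set.univ) := by
    ext ω
    simp only [Set.mem_setOf_eq, Set.mem_pi, Set.mem_univ, true_implies]
    constructor
    · intro h t; split_ifs with ht
      · simp [h t ht]
      · trivial
    · intro h t ht
      have := h t
      simp only [ht, if_true, Set.mem_singleton_iff] at this
      exact this
  rw [hypMeasure, hset, Measure.pi_pi]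
  rw [← Finset.prod_subset (Finset.subset_univ T)
    (fun t _ ht => by rw [if_neg ht]; exact measure_univ)]
  have : ∏ t ∈ T, (bern p) (if t ∈ T then ({true} : Set Bool) else Set.univ) =
      ∏ _t ∈ T, ENNReal.ofReal p :=
    Finset.prod_congr rfl (fun t ht => by rw [if_pos ht, bern_true])
  rw [this, Finset.prod_const]

lemma pow_self_le (m : ℕ) : (m : ℝ) ^ m ≤ Real.exp 1 ^ m * m.factorial := by
  induction m with
  | zero => simp
  | succ m ih =>
    have h1 : ((m : ℝ) + 1) ^ m ≤ Real.exp 1 * (m : ℝ) ^ m := by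
      rcases Nat.eq_zero_or_pos m with h | h
      · subst h; simpa using Real.one_le_exp zero_le_one
      · have hm : (0 : ℝ) < m := by exact_mod_cast h
        have hb : (m : ℝ) + 1 = (1 + 1 / m) * m := by field_simp
        rw [hb, mul_pow]
        have h2 : (1 + 1 / (m:ℝ)) ^ m ≤ Real.exp 1 := by
          have h3 : 1 + 1 / (m:ℝ) ≤ Real.exp (1 / m) := by
            have := Real.add_one_le_exp (1 / (m:ℝ)); linarith
          have h4 : Real.exp (1/(m:ℝ)) ^ m = Real.exp 1 := by
            rw [← Real.exp_nat_mul, mul_one_div, div_self hm.ne']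
          calc (1 + 1 / (m:ℝ)) ^ m ≤ Real.exp (1/(m:ℝ)) ^ m :=
                pow_le_pow_left₀ (by positivity) h3 m
            _ = Real.exp 1 := h4
        exact mul_le_mul_of_nonneg_right h2 (by positivity)
    have hcast : ((m+1 : ℕ) : ℝ) = (m : ℝ) + 1 := by push_cast; ring
    rw [hcast, pow_succ]
    show ((m:ℝ)+1)^m * ((m:ℝ)+1) ≤ _
    calc ((m:ℝ)+1)^m * ((m:ℝ)+1) ≤ (Real.exp 1 * (m:ℝ)^m) * ((m:ℝ)+1) := by
          apply mul_le_mul_of_nonneg_right h1 (by positivity)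
      _ ≤ (Real.exp 1 * (Real.exp 1 ^ m * m.factorial)) * ((m:ℝ)+1) := by
          apply mul_le_mul_of_nonneg_right (mul_le_mul_of_nonneg_left ih (Real.exp_pos 1).le)
            (by positivity)
      _ = Real.exp 1 ^ (m+1) * (m+1).factorial := by
          rw [Nat.factorial_succ]; push_cast; ring

lemma prod_event (n : ℕ) {p q : ℝ} (hp0 : 0 ≤ p) (hp1 : p ≤ 1) (hq0 : 0 ≤ q) (hq1 : q ≤ 1)
    (π : Equiv.Perm (Fin n)) (S : Finset (Finset (Fin n))) :
    ((hypMeasure n p).prod (hypMeasure n q))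
      ({ω : Finset (Fin n) → Bool | ∀ s ∈ S, ω (s.image ⇑π.symm) = true} ×ˢ
       {ω : Finset (Fin n) → Bool | ∀ s ∈ S, ω s = true})
    = ENNReal.ofReal p ^ S.card * ENNReal.ofReal q ^ S.card := by
  haveI := hyp_isProb n hp0 hp1
  haveI := hyp_isProb n hq0 hq1
  rw [Measure.prod_prod]
  have h1 : {ω : Finset (Fin n) → Bool | ∀ s ∈ S, ω (s.image ⇑π.symm) = true} =
      {ω : Finset (Fin n) → Bool | ∀ t ∈ S.image (fun s => s.image ⇑π.symm), ω t = true} := by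
    ext ω; simp [Finset.mem_image]
  have hcard : (S.image (fun s => s.image ⇑π.symm)).card = S.card :=
    Finset.card_image_of_injective S (Finset.image_injective π.symm.injective)
  rw [h1, hyp_cylinder n hp0 hp1, hyp_cylinder n hq0 hq1, hcard]

lemma numeric_main {n k : ℕ} (hn : 16 ≤ n) (hkn : k ≤ n)
    {p q γ' lam : ℝ} (hp : 0 < p) (hpq : p ≤ q) (hq1 : q ≤ 1)
    (hμ4 : p * q * (n.choose k) ≤ 4 * n * Real.log n)
    (hγ : γ' = 4 * Real.exp 1 * ((n:ℝ) * Real.log n) / (p * q * (n.choose k)))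
    (hlam : lam = 4 * Real.exp 2 * ((n:ℝ) * Real.log n) / Real.log γ') :
    0 ≤ lam ∧ p * q * (n.choose k) ≤ lam ∧
    (n.factorial : ℝ) * ((n.choose k).choose (⌊lam⌋₊+1)) * (p*q)^(⌊lam⌋₊+1)
      ≤ Real.exp (-(n:ℝ)/2) := by
  set E := Real.exp 1 with hEdef
  have hEpos : (0:ℝ) < E := Real.exp_pos 1
  have hE : (2:ℝ) ≤ E := by
    have := Real.exp_one_gt_d9; rw [← hEdef] at this; linarith
  have hE3 : E ≤ 3 := by
    have := Real.exp_one_lt_d9; rw [← hEdef] at this; linarith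
  have hnpos : (0:ℝ) < n := by positivity
  have hn16 : (16:ℝ) ≤ n := by exact_mod_cast hn
  have hlogn : 1 ≤ Real.log n := by
    rw [show (1:ℝ) = Real.log E from (Real.log_exp 1).symm]
    exact Real.log_le_log hEpos (by linarith)
  set A := (n:ℝ) * Real.log n with hAdef
  have hA : (n:ℝ) ≤ A := by nlinarith
  have hApos : (0:ℝ) < A := by nlinarith
  have hC1 : (1:ℝ) ≤ (n.choose k : ℝ) := by exact_mod_cast Nat.choose_pos hkn
  set μ := p * q * (n.choose k : ℝ) with hμdef
  have hμpos : 0 < μ := by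
    have hq0 : 0 < q := lt_of_lt_of_le hp hpq
    rw [hμdef]; positivity
  have hexp2 : Real.exp 2 = E ^ 2 := by
    rw [show (2:ℝ) = 1 + 1 by norm_num, Real.exp_add]; ring
  have hγpos : 0 < γ' := by rw [hγ]; positivity
  have hγμ : γ' * μ = 4 * E * A := by rw [hγ]; field_simp
  have hγE : E ≤ γ' := by
    rw [hγ, le_div_iff₀ hμpos]; nlinarith
  set L := Real.log γ' with hLdef
  have hL1 : 1 ≤ L := by
    rw [show (1:ℝ) = Real.log E from (Real.log_exp 1).symm]
    exact Real.log_le_log hEpos hγE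
  have hLpos : 0 < L := by linarith
  have hlamL : lam * L = 4 * E^2 * A := by
    rw [hlam, hexp2]; field_simp
  have hlampos : 0 < lam := by nlinarith
  have hLγ : L ≤ γ' := by
    have := Real.log_le_sub_one_of_pos hγpos; rw [← hLdef] at this; linarith
  have hμlam : μ ≤ lam := by
    have e1 : μ * (L * γ') = 4*E*A*L := by linear_combination L * hγμ
    have e2 : lam * (L * γ') = 4*E^2*A*γ' := by linear_combination γ' * hlamL
    have h3 : 4*E*A*L ≤ 4*E^2*A*γ' := by
      have k1 : 4*E*A*L ≤ 4*E*A*γ' :=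
        mul_le_mul_of_nonneg_left hLγ (by positivity)
      have k2 : 0 ≤ (E-1) * (4*E*A) * γ' :=
        mul_nonneg (mul_nonneg (by linarith) (by positivity)) hγpos.le
      nlinarith [k1, k2]
    exact le_of_mul_le_mul_right (by linarith) (mul_pos hLpos hγpos)
  have hlog0 : 0 ≤ Real.log L := Real.log_nonneg hL1
  have hlogL' : Real.log L * E ≤ L := by
    have h := Real.log_le_sub_one_of_pos (show 0 < L/E by positivity)
    rw [Real.log_div hLpos.ne' hEpos.ne', show Real.log E = 1 from Real.log_exp 1] at h
    have h2 : Real.log L ≤ L / E := by linarith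
    calc Real.log L * E = E * Real.log L := by ring
      _ ≤ L := by
          rw [← le_div_iff₀' hEpos]; exact h2
  have hlamEL : lam * L = E * (γ' * μ) := by rw [hγμ]; linarith [hlamL]
  have hlam_eq : lam = E * γ' * μ / L := by
    rw [eq_div_iff hLpos.ne']; linarith [hlamEL]
  have hloglam : Real.log lam - Real.log μ - 1 = L - Real.log L := by
    rw [hlam_eq, Real.log_div (by positivity) hLpos.ne',
      Real.log_mul (by positivity) hμpos.ne',
      Real.log_mul hEpos.ne' hγpos.ne', show Real.log E = 1 from Real.log_exp 1, ← hLdef]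
    ring
  have h1 : 0 ≤ Real.log lam - Real.log μ - 1 := by
    rw [hloglam]; nlinarith
  set m := ⌊lam⌋₊ + 1 with hmdef
  have hmlam : lam ≤ (m:ℝ) := by
    have := Nat.lt_floor_add_one lam; rw [hmdef]; push_cast; push_cast at this; linarith
  have hmpos : (0:ℝ) < m := by positivity
  have hkey : A + (n:ℝ)/2 ≤ (m:ℝ) * (Real.log (m:ℝ) - Real.log μ - 1) := by
    have hstep : A + (n:ℝ)/2 ≤ lam * (Real.log lam - Real.log μ - 1) := by
      rw [hloglam]
      have hx : lam * (Real.log L * E) ≤ lam * L :=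
        mul_le_mul_of_nonneg_left hlogL' hlampos.le
      have hxx : lam*L*E - lam*L ≤ E * (lam * (L - Real.log L)) := by nlinarith [hx]
      have h5 : lam*L*E - lam*L = 4*E^2*A*E - 4*E^2*A := by rw [hlamL]
      have h6 : E*(A + (n:ℝ)/2) ≤ 4*E^2*A*E - 4*E^2*A := by
        have hEn : E * ((n:ℝ)/2) ≤ E * (A/2) :=
          mul_le_mul_of_nonneg_left (by linarith) hEpos.le
        have hpoly : (0:ℝ) ≤ 4*E^2 - 4*E - 3/2 := by nlinarith [hE]
        have h8 : (0:ℝ) ≤ (A * E) * (4*E^2 - 4*E - 3/2) :=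
          mul_nonneg (mul_nonneg hApos.le hEpos.le) hpoly
        nlinarith [hEn, h8]
      have h7 : E*(A + (n:ℝ)/2) ≤ E * (lam * (L - Real.log L)) := by linarith
      exact le_of_mul_le_mul_left h7 hEpos
    have hlogm : Real.log lam ≤ Real.log (m:ℝ) := Real.log_le_log hlampos hmlam
    have := mul_le_mul hmlam (by linarith : Real.log lam - Real.log μ - 1 ≤
      Real.log (m:ℝ) - Real.log μ - 1) h1 hmpos.le
    linarith
  refine ⟨hlampos.le, hμlam, ?_⟩
  have hr0 : (0:ℝ) ≤ p * q := by nlinarith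
  have hfact : (n.factorial : ℝ) ≤ Real.exp A := by
    have h1' : (n.factorial : ℝ) ≤ (n:ℝ)^n := by exact_mod_cast Nat.factorial_le_pow n
    have h2' : Real.exp A = (n:ℝ)^n := by
      rw [hAdef, Real.exp_nat_mul, Real.exp_log hnpos]
    linarith
  have hchoose : ((n.choose k).choose m : ℝ) ≤ ((n.choose k : ℝ))^m / m.factorial := by
    have := Nat.choose_le_pow_div (α := ℝ) m (n.choose k)
    push_cast at this ⊢; convert this using 2 <;> push_cast <;> ring
  have hstep2 : μ^m / m.factorial ≤ (E*μ/(m:ℝ))^m := by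
    rw [div_pow, div_le_div_iff₀ (by positivity) (by positivity)]
    have := pow_self_le m
    calc μ^m * (m:ℝ)^m ≤ μ^m * (E^m * m.factorial) :=
          mul_le_mul_of_nonneg_left this (by positivity)
      _ = (E*μ)^m * (m.factorial : ℝ) := by rw [mul_pow]; ring
  have hstep3 : (E*μ/(m:ℝ))^m ≤ Real.exp (-(A + (n:ℝ)/2)) := by
    have hb : (0:ℝ) < E*μ/(m:ℝ) := by positivity
    rw [← Real.exp_log hb, ← Real.exp_nat_mul, Real.exp_le_exp]
    rw [Real.log_div (by positivity) hmpos.ne', Real.log_mul hEpos.ne' hμpos.ne',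
      show Real.log E = 1 from Real.log_exp 1]
    nlinarith [hkey]
  have hcore : ((n.choose k : ℝ))^m / m.factorial * (p*q)^m ≤ Real.exp (-(A + (n:ℝ)/2)) := by
    have : ((n.choose k : ℝ))^m / m.factorial * (p*q)^m = μ^m / m.factorial := by
      rw [hμdef]; rw [mul_pow, mul_pow]; ring
    rw [this]; exact hstep2.trans hstep3
  calc (n.factorial : ℝ) * ((n.choose k).choose m) * (p*q)^m
      = (n.factorial : ℝ) * (((n.choose k).choose m) * (p*q)^m) := by ring
    _ ≤ Real.exp A * (((n.choose k : ℝ))^m / m.factorial * (p*q)^m) := by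
        apply mul_le_mul hfact (mul_le_mul_of_nonneg_right hchoose (by positivity))
          (by positivity) (Real.exp_pos A).le
    _ ≤ Real.exp A * Real.exp (-(A + (n:ℝ)/2)) :=
        mul_le_mul_of_nonneg_left hcore (Real.exp_pos A).le
    _ = Real.exp (-(n:ℝ)/2) := by rw [← Real.exp_add]; ring_nf

lemma overlap_subset (n k : ℕ) (ω₁ ω₂ : Finset (Fin n) → Bool) (π : Equiv.Perm (Fin n)) :
    ((edgesOf n k ω₁).image fun e => e.image π) ∩ edgesOf n k ω₂ ⊆
      Finset.univ.filter fun s => s.card = k ∧ ω₂ s = true ∧ ω₁ (s.image ⇑π.symm) = true := by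
  intro s hs
  simp only [edgesOf, Finset.mem_inter, Finset.mem_image, Finset.mem_filter,
    Finset.mem_univ, true_and] at hs ⊢
  obtain ⟨⟨e, ⟨hek, he⟩, rfl⟩, hsk, hs2⟩ := hs
  refine ⟨hsk, hs2, ?_⟩
  rw [Finset.image_image]
  have : (⇑π.symm ∘ ⇑π) = id := by ext x; simp
  rw [this, Finset.image_id]
  exact he


/-- upper bound for the probabilistic discrepancy when
`pq C(n,k) ≤ 4 n log n`, with `γ' = 4e n log n / (pq C(n,k))` and
`λ = 4e² n log n / log γ'`. -/
theorem stmt12 :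
    ∃ n₀ : ℕ, ∀ n : ℕ, n₀ ≤ n → ∀ k : ℕ, 2 ≤ k → k ≤ n → ∀ p q : ℝ,
      0 < p → p ≤ q → q ≤ 1 →
      p * q * (n.choose k) ≤ 4 * (n : ℝ) * Real.log n →
      ∀ γ' lam : ℝ,
        γ' = 4 * Real.exp 1 * ((n : ℝ) * Real.log n) / (p * q * (n.choose k)) →
        lam = 4 * Real.exp 2 * ((n : ℝ) * Real.log n) / Real.log γ' →
        ENNReal.ofReal (1 - Real.exp (-(n : ℝ) / 2)) ≤
          ((hypMeasure n p).prod (hypMeasure n q))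
            {ω | discP n k p q (edgesOf n k ω.1) (edgesOf n k ω.2) ≤ lam} := by
  refine ⟨16, ?_⟩
  intro n hn k hk2 hkn p q hp hpq hq1 hμ4 γ' lam hγ hlam
  have hp1 : p ≤ 1 := hpq.trans hq1
  have hq0 : 0 ≤ q := hp.le.trans hpq
  haveI hPp := hyp_isProb n hp.le hp1
  haveI hPq := hyp_isProb n hq0 hq1
  set P := (hypMeasure n p).prod (hypMeasure n q) with hPdef
  haveI : IsProbabilityMeasure P := by rw [hPdef]; infer_instance
  obtain ⟨hlam0, hμlam, hmain⟩ := numeric_main hn hkn hp hpq hq1 hμ4 hγ hlam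
  set m := ⌊lam⌋₊ + 1 with hmdef
  set K := (Finset.univ : Finset (Fin n)).powersetCard k with hKdef
  set F := K.powersetCard m with hFdef
  set A : Equiv.Perm (Fin n) → Finset (Finset (Fin n)) →
      Set ((Finset (Fin n) → Bool) × (Finset (Fin n) → Bool)) := fun π S =>
    ({ω : Finset (Fin n) → Bool | ∀ s ∈ S, ω (s.image ⇑π.symm) = true} ×ˢ
     {ω : Finset (Fin n) → Bool | ∀ s ∈ S, ω s = true}) with hAdef
  set T := {ω : (Finset (Fin n) → Bool) × (Finset (Fin n) → Bool) |
    discP n k p q (edgesOf n k ω.1) (edgesOf n k ω.2) ≤ lam} with hTdef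
  have hincl : Tᶜ ⊆ ⋃ π ∈ (Finset.univ : Finset (Equiv.Perm (Fin n))), ⋃ S ∈ F, A π S := by
    intro ω hω
    simp only [hTdef, Set.mem_compl_iff, Set.mem_setOf_eq, not_le, discP,
      Finset.lt_sup'_iff, Finset.mem_univ, true_and] at hω
    obtain ⟨π, hπ⟩ := hω
    set X := overlap n (edgesOf n k ω.1) (edgesOf n k ω.2) π with hXdef
    have hXm : m ≤ X := by
      rcases lt_abs.mp hπ with h | h
      · have : lam < (X:ℝ) := by
          have hμ0 : 0 ≤ p * q * (n.choose k : ℝ) := by positivity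
          linarith
        rw [hmdef]
        exact Nat.succ_le_of_lt ((Nat.floor_lt hlam0).mpr this)
      · exfalso
        have : (X:ℝ) < p * q * (n.choose k) - lam := by linarith
        have hX0 : (0:ℝ) ≤ (X:ℝ) := Nat.cast_nonneg X
        linarith
    set D := Finset.univ.filter fun s : Finset (Fin n) =>
      s.card = k ∧ ω.2 s = true ∧ ω.1 (s.image ⇑π.symm) = true with hDdef
    have hXD : m ≤ D.card :=
      le_trans hXm (le_trans (Finset.card_le_card (overlap_subset n k ω.1 ω.2 π)) le_rfl)
    obtain ⟨S, hSD, hScard⟩ := Finset.exists_subset_card_eq hXD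
    have hSF : S ∈ F := by
      rw [hFdef, Finset.mem_powersetCard]
      refine ⟨fun s hs => ?_, hScard⟩
      have := hSD hs
      rw [hDdef, Finset.mem_filter] at this
      rw [hKdef, Finset.mem_powersetCard]
      exact ⟨Finset.subset_univ s, this.2.1⟩
    refine Set.mem_biUnion (Finset.mem_univ π) (Set.mem_biUnion hSF ?_)
    constructor
    · intro s hs
      have := hSD hs; rw [hDdef, Finset.mem_filter] at this; exact this.2.2.2
    · intro s hs
      have := hSD hs; rw [hDdef, Finset.mem_filter] at this; exact this.2.2.1
  have hbound : P Tᶜ ≤ ENNReal.ofReal (Real.exp (-(n:ℝ)/2)) := by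
    calc P Tᶜ ≤ P (⋃ π ∈ (Finset.univ : Finset (Equiv.Perm (Fin n))), ⋃ S ∈ F, A π S) :=
          measure_mono hincl
      _ ≤ ∑ π ∈ (Finset.univ : Finset (Equiv.Perm (Fin n))), P (⋃ S ∈ F, A π S) :=
          measure_biUnion_finset_le _ _
      _ ≤ ∑ π ∈ (Finset.univ : Finset (Equiv.Perm (Fin n))), ∑ S ∈ F, P (A π S) :=
          Finset.sum_le_sum fun π _ => measure_biUnion_finset_le _ _
      _ = ∑ _π ∈ (Finset.univ : Finset (Equiv.Perm (Fin n))), ∑ _S ∈ F,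
            (ENNReal.ofReal p ^ m * ENNReal.ofReal q ^ m) := by
          refine Finset.sum_congr rfl fun π _ => Finset.sum_congr rfl fun S hS => ?_
          have hScard : S.card = m := (Finset.mem_powersetCard.mp hS).2
          rw [hPdef, hAdef]
          rw [prod_event n hp.le hp1 hq0 hq1 π S, hScard]
      _ = (n.factorial : ℝ≥0∞) * (((n.choose k).choose m : ℕ) : ℝ≥0∞) *
            (ENNReal.ofReal p ^ m * ENNReal.ofReal q ^ m) := by
          rw [Finset.sum_const, Finset.sum_const, Finset.card_univ, Fintype.card_perm,
            Fintype.card_fin, hFdef, Finset.card_powersetCard, hKdef,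
            Finset.card_powersetCard, Finset.card_univ, Fintype.card_fin]
          simp only [nsmul_eq_mul]
          push_cast
          ring
      _ ≤ ENNReal.ofReal (Real.exp (-(n:ℝ)/2)) := by
          rw [← ENNReal.ofReal_pow hp.le, ← ENNReal.ofReal_pow hq0,
            ← ENNReal.ofReal_mul (by positivity), ← ENNReal.ofReal_natCast (n.factorial),
            ← ENNReal.ofReal_natCast ((n.choose k).choose m),
            ← ENNReal.ofReal_mul (by positivity), ← ENNReal.ofReal_mul (by positivity)]
          apply ENNReal.ofReal_le_ofReal
          calc (n.factorial : ℝ) * ((n.choose k).choose m : ℝ) * (p^m * q^m)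
              = (n.factorial : ℝ) * ((n.choose k).choose m : ℝ) * (p*q)^m := by
                rw [mul_pow]
            _ ≤ Real.exp (-(n:ℝ)/2) := hmain
  have huniv : (1:ℝ≥0∞) ≤ P T + P Tᶜ := by
    have h1 : P Set.univ = 1 := measure_univ
    have h2 : P (T ∪ Tᶜ) ≤ P T + P Tᶜ := measure_union_le T Tᶜ
    rw [Set.union_compl_self] at h2
    rw [← h1]; exact h2
  have : ENNReal.ofReal (1 - Real.exp (-(n:ℝ)/2)) ≤ P T := by
    rw [ENNReal.ofReal_sub _ (Real.exp_pos _).le, ENNReal.ofReal_one]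
    rw [tsub_le_iff_right]
    calc (1:ℝ≥0∞) ≤ P T + P Tᶜ := huniv
      _ ≤ P T + ENNReal.ofReal (Real.exp (-(n:ℝ)/2)) := add_le_add_right hbound _
  exact this
end

section
/- Fix integers n ≥ k ≥ 2 and reals 0 < p ≤ q ≤ 1 with p q·C(n,k) ≤ 4·n·log n. Set γ' = 4e·(n·log n)/(p q·C(n,k)) and λ = 4e²·(n·log n)/(log γ'). Let X be a binomial random variable with parameters C(n,k) and pq. Then P[X > λ] ≤ (γ'/log γ')^{−4e²·n·log n/log γ'} < e^{−n·log n}. -/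
set_option maxHeartbeats 1000000


/-- tail bound for a binomial random variable `X ~ Bin(C(n,k), pq)`,
with `γ' = 4e·n·log n/(pq·C(n,k))` and `λ = 4e²·n·log n/log γ'`.
`P[X > λ]` is written out as the explicit binomial tail sum. -/
theorem stmt13 (n k : ℕ) (hk : 2 ≤ k) (hkn : k ≤ n) (p q : ℝ)
    (hp : 0 < p) (hpq : p ≤ q) (hq : q ≤ 1)
    (hsparse : p * q * (n.choose k) ≤ 4 * (n : ℝ) * Real.log n)
    (γ' lam : ℝ)
    (hγ' : γ' = 4 * Real.exp 1 * ((n : ℝ) * Real.log n) / (p * q * (n.choose k)))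
    (hlam : lam = 4 * Real.exp 2 * ((n : ℝ) * Real.log n) / Real.log γ') :
    (∑ t ∈ (Finset.range (n.choose k + 1)).filter (fun t : ℕ => lam < (t : ℝ)),
        ((n.choose k).choose t : ℝ) * (p * q) ^ t * (1 - p * q) ^ (n.choose k - t)) ≤
      (γ' / Real.log γ') ^ (-(4 * Real.exp 2 * (n : ℝ) * Real.log n / Real.log γ')) ∧
    (γ' / Real.log γ') ^ (-(4 * Real.exp 2 * (n : ℝ) * Real.log n / Real.log γ')) <
      Real.exp (-((n : ℝ) * Real.log n)) := by
  have hn2 : 2 ≤ n := le_trans hk hkn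
  have hn2' : (2:ℝ) ≤ (n:ℝ) := by exact_mod_cast hn2
  have hlogn : 0 < Real.log n := Real.log_pos (by linarith)
  have hnlogn : 0 < (n : ℝ) * Real.log n := by nlinarith
  have hNpos : 0 < n.choose k := Nat.choose_pos hkn
  have hN : (0:ℝ) < ((n.choose k : ℕ) : ℝ) := by exact_mod_cast hNpos
  have hq0 : 0 < q := lt_of_lt_of_le hp hpq
  have hr : 0 < p * q := mul_pos hp hq0
  have hp1 : p ≤ 1 := hpq.trans hq
  have hr1 : p * q ≤ 1 := by nlinarith
  have hμ : 0 < p * q * ((n.choose k : ℕ) : ℝ) := mul_pos hr hN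
  have he1 : (0:ℝ) < Real.exp 1 := Real.exp_pos 1
  have he2 : Real.exp 2 = Real.exp 1 * Real.exp 1 := by
    rw [show (2:ℝ) = 1 + 1 by norm_num, Real.exp_add]
  -- γ' ≥ e
  have hγpos : 0 < γ' := by
    rw [hγ']; positivity
  have heγ : Real.exp 1 ≤ γ' := by
    rw [hγ', le_div_iff₀ hμ]
    nlinarith
  set L := Real.log γ' with hLdef
  have hL1 : 1 ≤ L := (Real.le_log_iff_exp_le hγpos).2 heγ
  have hLpos : 0 < L := by linarith
  have hlogL : Real.log L ≤ L - 1 := Real.log_le_sub_one_of_pos hLpos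
  have hD1 : 1 ≤ L - Real.log L := by linarith
  have hγL : 0 < γ' / L := div_pos hγpos hLpos
  have hlogγL : Real.log (γ' / L) = L - Real.log L :=
    Real.log_div (ne_of_gt hγpos) (ne_of_gt hLpos)
  have hlampos : 0 < lam := by
    rw [hlam]; positivity
  -- lam = e * γ' * μ / L
  have hγμ : γ' * (p * q * ((n.choose k : ℕ) : ℝ)) =
      4 * Real.exp 1 * ((n : ℝ) * Real.log n) := by
    rw [hγ']; field_simp
  have hlam_eq : lam = Real.exp 1 * γ' * (p * q * ((n.choose k : ℕ) : ℝ)) / L := by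
    rw [hlam, he2]
    rw [show Real.exp 1 * γ' * (p * q * ((n.choose k : ℕ) : ℝ)) =
        Real.exp 1 * (γ' * (p * q * ((n.choose k : ℕ) : ℝ))) by ring, hγμ]
    ring
  -- exponent s
  set s := 1 + (L - Real.log L) with hsdef
  have hs0 : 0 ≤ s := by linarith
  have hexps : Real.exp s = Real.exp 1 * (γ' / L) := by
    rw [hsdef, Real.exp_add, ← hlogγL, Real.exp_log hγL]
  have hsμ : Real.exp s * (p * q * ((n.choose k : ℕ) : ℝ)) = lam := by
    rw [hexps, hlam_eq]; ring
  have hexps1 : 1 ≤ Real.exp s := Real.one_le_exp hs0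
  -- abbreviations
  set N := n.choose k with hNdef
  set r := p * q with hrdef
  set μ := r * ((N : ℕ) : ℝ) with hμdef
  -- the rpow equals exp(-(lam * (L - log L)))
  have hrpow : (γ' / L) ^ (-(4 * Real.exp 2 * (n : ℝ) * Real.log n / L)) =
      Real.exp (-(lam * (L - Real.log L))) := by
    have hexp_eq : -(4 * Real.exp 2 * (n : ℝ) * Real.log n / L) = -lam := by
      rw [hlam]; ring
    rw [hexp_eq, Real.rpow_def_of_pos hγL, hlogγL]
    ring_nf
  constructor
  · -- Chernoff bound
    have step1 : (∑ t ∈ (Finset.range (N + 1)).filter (fun t : ℕ => lam < (t : ℝ)),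
          ((N.choose t : ℕ) : ℝ) * r ^ t * (1 - r) ^ (N - t)) ≤
        ∑ t ∈ Finset.range (N + 1),
          Real.exp (s * ((t : ℝ) - lam)) * (((N.choose t : ℕ) : ℝ) * r ^ t * (1 - r) ^ (N - t)) := by
      calc (∑ t ∈ (Finset.range (N + 1)).filter (fun t : ℕ => lam < (t : ℝ)),
          ((N.choose t : ℕ) : ℝ) * r ^ t * (1 - r) ^ (N - t))
          ≤ ∑ t ∈ (Finset.range (N + 1)).filter (fun t : ℕ => lam < (t : ℝ)),
            Real.exp (s * ((t : ℝ) - lam)) * (((N.choose t : ℕ) : ℝ) * r ^ t * (1 - r) ^ (N - t)) := by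
            apply Finset.sum_le_sum
            intro t ht
            have htlam : lam < (t : ℝ) := (Finset.mem_filter.1 ht).2
            have h1 : 1 ≤ Real.exp (s * ((t : ℝ) - lam)) :=
              Real.one_le_exp (mul_nonneg hs0 (by linarith))
            have hfnn : 0 ≤ ((N.choose t : ℕ) : ℝ) * r ^ t * (1 - r) ^ (N - t) := by
              have : (0:ℝ) ≤ 1 - r := by linarith
              positivity
            exact le_mul_of_one_le_left hfnn h1
        _ ≤ ∑ t ∈ Finset.range (N + 1),
            Real.exp (s * ((t : ℝ) - lam)) * (((N.choose t : ℕ) : ℝ) * r ^ t * (1 - r) ^ (N - t)) := by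
            apply Finset.sum_le_sum_of_subset_of_nonneg (Finset.filter_subset _ _)
            intro t _ _
            have : (0:ℝ) ≤ 1 - r := by linarith
            positivity
    have step2 : ∑ t ∈ Finset.range (N + 1),
          Real.exp (s * ((t : ℝ) - lam)) * (((N.choose t : ℕ) : ℝ) * r ^ t * (1 - r) ^ (N - t))
        = Real.exp (-(s * lam)) * (r * Real.exp s + (1 - r)) ^ N := by
      rw [add_pow, Finset.mul_sum]
      apply Finset.sum_congr rfl
      intro t _
      rw [show s * ((t : ℝ) - lam) = (t : ℝ) * s + (-(s * lam)) by ring, Real.exp_add,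
        Real.exp_nat_mul, mul_pow]
      ring
    have hbase0 : (0:ℝ) ≤ r * Real.exp s + (1 - r) := by nlinarith
    have step3 : (r * Real.exp s + (1 - r)) ^ N ≤ Real.exp (μ * (Real.exp s - 1)) := by
      have h1 : r * Real.exp s + (1 - r) ≤ Real.exp (r * (Real.exp s - 1)) := by
        have := Real.add_one_le_exp (r * (Real.exp s - 1))
        nlinarith
      calc (r * Real.exp s + (1 - r)) ^ N ≤ (Real.exp (r * (Real.exp s - 1))) ^ N :=
            pow_le_pow_left₀ hbase0 h1 N
        _ = Real.exp (((N : ℕ) : ℝ) * (r * (Real.exp s - 1))) := (Real.exp_nat_mul _ N).symm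
        _ = Real.exp (μ * (Real.exp s - 1)) := by rw [hμdef]; ring_nf
    have step4 : Real.exp (-(s * lam)) * Real.exp (μ * (Real.exp s - 1)) ≤
        Real.exp (-(lam * (L - Real.log L))) := by
      rw [← Real.exp_add, Real.exp_le_exp]
      have hμexp : μ * Real.exp s = lam := by rw [hμdef, hrdef]; rw [← hsμ]; ring
      have : μ * (Real.exp s - 1) = lam - μ := by rw [mul_sub, hμexp]; ring
      rw [this]
      have hslam : s * lam = lam + lam * (L - Real.log L) := by rw [hsdef]; ring
      rw [hslam]
      have hμ0 : 0 < μ := hμ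
      linarith
    calc (∑ t ∈ (Finset.range (N + 1)).filter (fun t : ℕ => lam < (t : ℝ)),
          ((N.choose t : ℕ) : ℝ) * r ^ t * (1 - r) ^ (N - t))
        ≤ Real.exp (-(s * lam)) * (r * Real.exp s + (1 - r)) ^ N := by rw [← step2]; exact step1
      _ ≤ Real.exp (-(s * lam)) * Real.exp (μ * (Real.exp s - 1)) := by
          exact mul_le_mul_of_nonneg_left step3 (le_of_lt (Real.exp_pos _))
      _ ≤ Real.exp (-(lam * (L - Real.log L))) := step4
      _ = (γ' / L) ^ (-(4 * Real.exp 2 * (n : ℝ) * Real.log n / L)) := hrpow.symm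
  · -- second inequality
    rw [hrpow, Real.exp_lt_exp, neg_lt_neg_iff]
    -- need n log n < lam * (L - log L)
    have hlogLe : Real.log L ≤ L / Real.exp 1 := by
      have h1 : 0 < L / Real.exp 1 := div_pos hLpos he1
      have h2 : Real.log (L / Real.exp 1) ≤ L / Real.exp 1 - 1 :=
        Real.log_le_sub_one_of_pos h1
      have h3 : Real.log (L / Real.exp 1) = Real.log L - 1 := by
        rw [Real.log_div (ne_of_gt hLpos) (ne_of_gt he1), Real.log_exp]
      linarith
    have he27 : (2.7:ℝ) < Real.exp 1 := by
      have := Real.exp_one_gt_d9; linarith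
    have hle : Real.log L * Real.exp 1 ≤ L := by
      have h := mul_le_mul_of_nonneg_right hlogLe he1.le
      rwa [div_mul_cancel₀ _ (ne_of_gt he1)] at h
    have hDL : (Real.exp 1 - 1) / Real.exp 1 ≤ (L - Real.log L) / L := by
      rw [div_le_div_iff₀ he1 hLpos]
      nlinarith
    have hlamD : lam * (L - Real.log L) =
        4 * Real.exp 2 * ((n : ℝ) * Real.log n) * ((L - Real.log L) / L) := by
      rw [hlam]; field_simp
    rw [hlamD]
    have key : 1 < 4 * Real.exp 2 * ((L - Real.log L) / L) := by
      have h2 : 4 * Real.exp 2 * ((Real.exp 1 - 1) / Real.exp 1) =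
          4 * Real.exp 1 * (Real.exp 1 - 1) := by
        rw [he2]; field_simp
      have h3 := mul_le_mul_of_nonneg_left hDL
        (show (0:ℝ) ≤ 4 * Real.exp 2 by positivity)
      nlinarith
    nlinarith [mul_lt_mul_of_pos_left key hnlogn]
end

section
/- Fix an integer k ≥ 2 and let n be a multiple of k. Let L and R be disjoint finite sets with |L| = n/k and |R| = N, and let G̃ be the random bipartite graph between L and R in which each pair (u, w) ∈ L × R is an edge independently with probability p, where p·N ≥ 8. Call a vertex u ∈ L surviving if |deg_{G̃}(u) − pN| ≤ 2√(2pN). Then with probability at least 1 − 2e^{−n/(64k)}, at least n/(4k) vertices of L survive. -/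
open MeasureTheory Finset

instance bern_finite (p : ℝ) : IsFiniteMeasure (bern p) := by
  constructor; simp [bern]

lemma bern_prob_s14 {p : ℝ} (hp0 : 0 ≤ p) (hp1 : p ≤ 1) : IsProbabilityMeasure (bern p) := by
  constructor
  simp only [bern, Measure.add_apply, Measure.smul_apply, Measure.dirac_apply_of_mem,
    Set.mem_univ, smul_eq_mul, mul_one]
  rw [← ENNReal.ofReal_add hp0 (by linarith)]
  norm_num

lemma integral_bern {p : ℝ} (hp0 : 0 ≤ p) (hp1 : p ≤ 1) (f : Bool → ℝ) :
    ∫ b, f b ∂(bern p) = p * f true + (1 - p) * f false := by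
  rw [bern, integral_add_measure, integral_smul_measure, integral_smul_measure,
    integral_dirac, integral_dirac]
  · rw [ENNReal.toReal_ofReal hp0, ENNReal.toReal_ofReal (by linarith)]
    simp [smul_eq_mul]
  · exact Integrable.of_finite.smul_measure ENNReal.ofReal_ne_top
  · exact Integrable.of_finite.smul_measure ENNReal.ofReal_ne_top

lemma cheb (p : ℝ) (N : ℕ) (hp0 : 0 ≤ p) (hp1 : p ≤ 1) (hpN : 8 ≤ p * N) :
    (Measure.pi fun _ : Fin N => bern p)
      {g : Fin N → Bool |
        ¬ |((univ.filter fun w : Fin N => g w = true).card : ℝ) - p * N| ≤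
          2 * Real.sqrt (2 * p * N)} ≤ ENNReal.ofReal (1/8) := by
  classical
  letI : MeasureSpace Bool := ⟨bern p⟩
  haveI : IsProbabilityMeasure (volume : Measure Bool) := bern_prob_s14 hp0 hp1
  set μ : Measure (Fin N → Bool) := Measure.pi fun _ : Fin N => bern p with hμ
  have hvol : (volume : Measure (Fin N → Bool)) = μ := rfl
  haveI : IsProbabilityMeasure μ := by rw [← hvol]; infer_instance
  set c : Bool → ℝ := fun b => (if b = true then (1:ℝ) else 0) - p with hc
  have hI : ∀ h : (Fin N → Bool) → ℝ, Integrable h μ := fun h => Integrable.of_finite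
  have hdeg : ∀ g : Fin N → Bool,
      ((univ.filter fun w : Fin N => g w = true).card : ℝ) - p * N = ∑ w, c (g w) := by
    intro g
    rw [Finset.card_filter]
    push_cast
    rw [Finset.sum_sub_distrib]
    simp [Finset.sum_const, mul_comm]
  -- integral of a single factor
  have hcint : ∫ b, c b ∂(bern p) = 0 := by
    rw [integral_bern hp0 hp1]; simp [hc]; ring
  have hc2int : ∫ b, c b * c b ∂(bern p) = p - p^2 := by
    rw [integral_bern hp0 hp1]; simp [hc]; ring
  have hterm : ∀ w w' : Fin N,
      (∫ g, c (g w) * c (g w') ∂μ) = if w = w' then p - p^2 else 0 := by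
    intro w w'
    by_cases hww : w = w'
    · subst hww
      simp only [if_pos rfl]
      set F : Fin N → Bool → ℝ := fun i b => if i = w then c b * c b else 1 with hF
      have h1 : ∀ g : Fin N → Bool, c (g w) * c (g w) = ∏ i, F i (g i) := by
        intro g
        rw [Finset.prod_eq_single w (fun b _ hb => by simp [hF, hb]) (by simp)]
        simp [hF]
      simp_rw [h1]
      rw [← hvol, volume_pi, integral_fintype_prod_eq_prod F]
      rw [Finset.prod_eq_single w (fun b _ hb => by
        simp only [hF, if_neg hb, integral_const, probReal_univ, measure_univ, ENNReal.toReal_one, smul_eq_mul,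
          mul_one, one_smul]) (by simp)]
      simp [hF]
      exact hc2int
    · simp only [if_neg hww]
      set F : Fin N → Bool → ℝ := fun i b => if i ∈ ({w, w'} : Finset (Fin N)) then c b else 1
        with hF
      have h1 : ∀ g : Fin N → Bool, c (g w) * c (g w') = ∏ i, F i (g i) := by
        intro g
        have : ∏ i, F i (g i) = ∏ i ∈ ({w, w'} : Finset (Fin N)), c (g i) := by
          rw [Finset.prod_ite_mem univ ({w, w'} : Finset (Fin N)), Finset.univ_inter]
        rw [this, Finset.prod_pair hww]
      simp_rw [h1]
      rw [← hvol, volume_pi, integral_fintype_prod_eq_prod F]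
      have h2 : ∀ i : Fin N, (∫ b, F i b) =
          if i ∈ ({w, w'} : Finset (Fin N)) then (∫ b, c b ∂(bern p)) else 1 := by
        intro i
        by_cases hi : i ∈ ({w, w'} : Finset (Fin N))
        · simp only [hF, if_pos hi]; rfl
        · simp only [hF, if_neg hi, integral_const, probReal_univ, measure_univ, ENNReal.toReal_one,
            smul_eq_mul, mul_one, one_smul]
      simp_rw [h2]
      rw [Finset.prod_ite_mem univ ({w, w'} : Finset (Fin N)), Finset.univ_inter,
        Finset.prod_pair hww, hcint, mul_zero]
  -- the second moment
  have hE : (∫ g, (((univ.filter fun w : Fin N => g w = true).card : ℝ) - p * N)^2 ∂μ)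
      = N * (p - p^2) := by
    have h2 : ∀ g : Fin N → Bool,
        (((univ.filter fun w : Fin N => g w = true).card : ℝ) - p * N)^2
          = ∑ w, ∑ w', c (g w) * c (g w') := by
      intro g
      rw [hdeg g, pow_two, Finset.sum_mul_sum]
    simp_rw [h2]
    rw [integral_finset_sum _ (fun w _ => hI _)]
    have : ∀ w : Fin N, (∫ g, ∑ w', c (g w) * c (g w') ∂μ) = p - p^2 := by
      intro w
      rw [integral_finset_sum _ (fun w' _ => hI _)]
      simp_rw [hterm w]
      simp
    simp_rw [this]
    simp [mul_comm]
    ring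
  -- Markov
  have hpN0 : (0:ℝ) < p * N := by linarith
  have markov := mul_meas_ge_le_integral_of_nonneg
    (ae_of_all μ (fun g => sq_nonneg (((univ.filter fun w : Fin N => g w = true).card : ℝ) - p * N)))
    (hI _) (8 * (p * N))
  rw [hE, measureReal_def] at markov
  have hsub : {g : Fin N → Bool |
        ¬ |((univ.filter fun w : Fin N => g w = true).card : ℝ) - p * N| ≤
          2 * Real.sqrt (2 * p * N)} ⊆
      {g : Fin N → Bool |
        8 * (p * N) ≤ (((univ.filter fun w : Fin N => g w = true).card : ℝ) - p * N)^2} := by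
    intro g hg
    simp only [Set.mem_setOf_eq, not_le] at hg ⊢
    have hs : Real.sqrt (2 * p * N) ^ 2 = 2 * p * N := Real.sq_sqrt (by linarith)
    have h0 : (0:ℝ) ≤ 2 * Real.sqrt (2 * p * N) := by positivity
    calc 8 * (p * N) = (2 * Real.sqrt (2 * p * N))^2 := by rw [mul_pow, hs]; ring
    _ ≤ |((univ.filter fun w : Fin N => g w = true).card : ℝ) - p * N| ^ 2 := by
        apply pow_le_pow_left₀ h0 hg.le
    _ = _ := by rw [sq_abs]
  have hmono : μ _ ≤ μ _ := measure_mono hsub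
  have htr : (μ {g : Fin N → Bool |
        ¬ |((univ.filter fun w : Fin N => g w = true).card : ℝ) - p * N| ≤
          2 * Real.sqrt (2 * p * N)}).toReal ≤ 1/8 := by
    have h1 : (μ {g : Fin N → Bool |
        8 * (p * N) ≤ (((univ.filter fun w : Fin N => g w = true).card : ℝ) - p * N)^2}).toReal
        ≤ 1/8 := by
      nlinarith [ENNReal.toReal_nonneg (a := μ {g : Fin N → Bool |
        8 * (p * N) ≤ (((univ.filter fun w : Fin N => g w = true).card : ℝ) - p * N)^2}),
        hp0, hp1, hpN0, markov, mul_le_of_le_one_right (le_of_lt hpN0) hp1,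
        sq_nonneg p]
    exact le_trans (ENNReal.toReal_mono (measure_ne_top _ _) hmono) h1
  rw [ENNReal.le_ofReal_iff_toReal_le (measure_ne_top _ _) (by norm_num)]
  exact htr

lemma map_curry (p : ℝ) (hp0 : 0 ≤ p) (hp1 : p ≤ 1) (m N : ℕ) :
    (Measure.pi fun _ : Fin m × Fin N => bern p).map
        (fun ω (u : Fin m) (w : Fin N) => ω (u, w))
      = Measure.pi fun _ : Fin m => (Measure.pi fun _ : Fin N => bern p) := by
  classical
  haveI := bern_prob_s14 hp0 hp1
  have hcm : Measurable (fun (ω : Fin m × Fin N → Bool) (u : Fin m) (w : Fin N) => ω (u, w)) :=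
    measurable_pi_lambda _ fun u => measurable_pi_lambda _ fun w => measurable_pi_apply (u, w)
  refine Eq.symm (Measure.pi_eq_generateFrom (fun _ => generateFrom_pi)
    (fun _ => isPiSystem_pi)
    (fun _ => ⟨fun _ => Set.univ,
      fun _ => ⟨fun _ => Set.univ, fun i _ => MeasurableSet.univ, Set.pi_univ _⟩,
      fun _ => by simp [measure_univ], Set.iUnion_const _⟩) ?_)
  intro s hs
  choose t ht hteq using hs
  have hpre : (fun (ω : Fin m × Fin N → Bool) (u : Fin m) (w : Fin N) => ω (u, w)) ⁻¹'
      (Set.univ.pi s) = Set.univ.pi (fun x : Fin m × Fin N => t x.1 x.2) := by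
    ext ω
    simp only [Set.mem_preimage, Set.mem_univ_pi]
    constructor
    · intro h x
      have := h x.1
      rw [← hteq x.1] at this
      exact this x.2 (Set.mem_univ _)
    · intro h u
      rw [← hteq u]
      intro w _
      exact h (u, w)
  rw [Measure.map_apply hcm ((Set.to_countable _).measurableSet), hpre, Measure.pi_pi,
    Fintype.prod_prod_type]
  refine Finset.prod_congr rfl fun u _ => ?_
  rw [← hteq u, Measure.pi_pi]

lemma blocks (p : ℝ) (hp0 : 0 ≤ p) (hp1 : p ≤ 1) (m N : ℕ) (A : Set (Fin N → Bool))
    (S : Finset (Fin m)) :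
    (Measure.pi fun _ : Fin m × Fin N => bern p)
        {ω | ∀ u ∈ S, (fun w => ω (u, w)) ∈ A}
      = ((Measure.pi fun _ : Fin N => bern p) A) ^ S.card := by
  classical
  haveI := bern_prob_s14 hp0 hp1
  have hcm : Measurable (fun (ω : Fin m × Fin N → Bool) (u : Fin m) (w : Fin N) => ω (u, w)) :=
    measurable_pi_lambda _ fun u => measurable_pi_lambda _ fun w => measurable_pi_apply (u, w)
  have hpre : {ω : Fin m × Fin N → Bool | ∀ u ∈ S, (fun w => ω (u, w)) ∈ A}
      = (fun (ω : Fin m × Fin N → Bool) (u : Fin m) (w : Fin N) => ω (u, w)) ⁻¹'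
        (Set.univ.pi fun u => if u ∈ S then A else Set.univ) := by
    ext ω
    simp only [Set.mem_setOf_eq, Set.mem_preimage, Set.mem_univ_pi]
    constructor
    · intro h u
      by_cases hu : u ∈ S
      · simpa [hu] using h u hu
      · simp [hu]
    · intro h u hu
      simpa [hu] using h u
  rw [hpre, ← Measure.map_apply hcm ((Set.to_countable _).measurableSet),
    map_curry p hp0 hp1 m N, Measure.pi_pi]
  have h1 : ∀ u : Fin m,
      (Measure.pi fun _ : Fin N => bern p) (if u ∈ S then A else Set.univ)
        = if u ∈ S then (Measure.pi fun _ : Fin N => bern p) A else 1 := by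
    intro u; split_ifs <;> simp [measure_univ]
  simp_rw [h1]
  rw [Finset.prod_ite_mem univ S, Finset.univ_inter, Finset.prod_const]

lemma choose_le_two_pow' (m j : ℕ) : m.choose j ≤ 2 ^ m := by
  rcases le_or_gt j m with h | h
  · calc m.choose j ≤ ∑ i ∈ Finset.range (m + 1), m.choose i :=
        Finset.single_le_sum (fun i _ => Nat.zero_le _) (Finset.mem_range.2 (by omega))
      _ = 2 ^ m := Nat.sum_range_choose m
  · simp [Nat.choose_eq_zero_of_lt h]

lemma realineq (m j : ℕ) (hj : 3 * m ≤ 4 * j) :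
    (2 : ℝ) ^ m * (1 / 8) ^ j ≤ Real.exp (-(m : ℝ) / 64) := by
  have h4 : ((2 : ℝ) ^ m * (1 / 8) ^ j) ^ 4 ≤ (Real.exp (-(m : ℝ) / 64)) ^ 4 := by
    have l1 : ((2 : ℝ) ^ m * (1 / 8) ^ j) ^ 4 = 2 ^ (4 * m) * (1 / 8) ^ (4 * j) := by
      rw [mul_pow, ← pow_mul, ← pow_mul, mul_comm m 4, mul_comm j 4]
    have l2 : ((1 : ℝ) / 8) ^ (4 * j) ≤ (1 / 8) ^ (3 * m) :=
      pow_le_pow_of_le_one (by norm_num) (by norm_num) hj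
    have l3 : (2 : ℝ) ^ (4 * m) * (1 / 8) ^ (3 * m) = (1 / 32) ^ m := by
      rw [pow_mul, pow_mul, ← mul_pow]; norm_num
    have l4 : ((1 : ℝ) / 32) ^ m ≤ (Real.exp (-(1 : ℝ) / 16)) ^ m := by
      apply pow_le_pow_left₀ (by norm_num)
      nlinarith [Real.add_one_le_exp (-(1 : ℝ) / 16)]
    have l5 : (Real.exp (-(1 : ℝ) / 16)) ^ m = (Real.exp (-(m : ℝ) / 64)) ^ 4 := by
      rw [← Real.exp_nat_mul, ← Real.exp_nat_mul]
      congr 1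
      push_cast
      ring
    calc ((2 : ℝ) ^ m * (1 / 8) ^ j) ^ 4 = 2 ^ (4 * m) * (1 / 8) ^ (4 * j) := l1
      _ ≤ 2 ^ (4 * m) * (1 / 8) ^ (3 * m) := by
          apply mul_le_mul_of_nonneg_left l2 (by positivity)
      _ = (1 / 32) ^ m := l3
      _ ≤ (Real.exp (-(1 : ℝ) / 16)) ^ m := l4
      _ = (Real.exp (-(m : ℝ) / 64)) ^ 4 := l5
  exact le_of_pow_le_pow_left₀ (by norm_num) (Real.exp_pos _).le h4


/-- in the random bipartite graph between `L` (of size `n/k`)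
and `R` (of size `N`) with edge probability `p`, with probability at least
`1 - 2e^{-n/(64k)}` at least `n/(4k)` vertices of `L` survive, i.e. have degree
within `2√(2pN)` of `pN`. -/
theorem stmt14 (k : ℕ) (hk : 2 ≤ k) (n : ℕ) (hkn : k ∣ n) (N : ℕ) (hN : 0 < N)
    (p : ℝ) (hp0 : 0 ≤ p) (hp1 : p ≤ 1) (hpN : 8 ≤ p * N) :
    ENNReal.ofReal (1 - 2 * Real.exp (-(n : ℝ) / (64 * k))) ≤
      (Measure.pi fun _ : Fin (n / k) × Fin N => bern p)
        {ω | (n : ℝ) / (4 * k) ≤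
          ((Finset.univ.filter fun u : Fin (n / k) =>
            |(((Finset.univ.filter fun w : Fin N => ω (u, w) = true).card : ℝ)) - p * N| ≤
              2 * Real.sqrt (2 * p * N)).card : ℝ)} := by
  classical
  haveI := bern_prob_s14 hp0 hp1
  have hk0 : 0 < k := by omega
  set m := n / k with hm
  have hn : (n : ℝ) = (k : ℝ) * m := by
    rw [hm]
    exact_mod_cast (Nat.mul_div_cancel' hkn).symm
  set μ := Measure.pi fun _ : Fin m × Fin N => bern p with hμ
  haveI : IsProbabilityMeasure μ := by rw [hμ]; infer_instance
  set A : Set (Fin N → Bool) := {g | ¬ |((univ.filter fun w : Fin N => g w = true).card : ℝ)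
      - p * N| ≤ 2 * Real.sqrt (2 * p * N)} with hA
  set E : Set (Fin m × Fin N → Bool) := {ω | (n : ℝ) / (4 * k) ≤
      ((univ.filter fun u : Fin m =>
        |((univ.filter fun w : Fin N => ω (u, w) = true).card : ℝ) - p * N| ≤
          2 * Real.sqrt (2 * p * N)).card : ℝ)} with hEdef
  show ENNReal.ofReal (1 - 2 * Real.exp (-(n : ℝ) / (64 * k))) ≤ μ E
  have hk' : (0 : ℝ) < k := by exact_mod_cast hk0
  have hx : Real.exp (-(n : ℝ) / (64 * k)) = Real.exp (-(m : ℝ) / 64) := by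
    rw [hn]
    congr 1
    field_simp
  rcases Nat.eq_zero_or_pos m with hm0 | hm1
  · have hle : (1 : ℝ) - 2 * Real.exp (-(n : ℝ) / (64 * k)) ≤ 0 := by
      rw [hx, hm0]
      norm_num
    rw [ENNReal.ofReal_of_nonpos hle]
    exact zero_le
  · set j := m - (m - 1) / 4 with hjdef
    have hq : (m - 1) / 4 * 4 ≤ m - 1 := Nat.div_mul_le_self _ _
    have hj3 : 3 * m ≤ 4 * j := by omega
    have hEmeas : MeasurableSet E := (Set.to_countable E).measurableSet
    have hsub : Eᶜ ⊆ ⋃ S ∈ (powersetCard j (univ : Finset (Fin m)) :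
        Finset (Finset (Fin m))),
        {ω : Fin m × Fin N → Bool | ∀ u ∈ S, (fun w => ω (u, w)) ∈ A} := by
      intro ω hω
      simp only [hEdef, Set.mem_compl_iff, Set.mem_setOf_eq, not_le] at hω
      have h4 : 4 * (univ.filter fun u : Fin m =>
          |((univ.filter fun w : Fin N => ω (u, w) = true).card : ℝ) - p * N| ≤
            2 * Real.sqrt (2 * p * N)).card < m := by
        have h1 : ((univ.filter fun u : Fin m =>
            |((univ.filter fun w : Fin N => ω (u, w) = true).card : ℝ) - p * N| ≤
              2 * Real.sqrt (2 * p * N)).card : ℝ) < (m : ℝ) / 4 := by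
          rw [hn] at hω
          calc ((univ.filter fun u : Fin m =>
              |((univ.filter fun w : Fin N => ω (u, w) = true).card : ℝ) - p * N| ≤
                2 * Real.sqrt (2 * p * N)).card : ℝ) < ((k : ℝ) * m) / (4 * k) := hω
          _ = (m : ℝ) / 4 := by field_simp
        have h2 : (4 * (univ.filter fun u : Fin m =>
            |((univ.filter fun w : Fin N => ω (u, w) = true).card : ℝ) - p * N| ≤
              2 * Real.sqrt (2 * p * N)).card : ℝ) < (m : ℝ) := by linarith
        exact_mod_cast h2
      have hpart : (univ.filter fun u : Fin m =>
          |((univ.filter fun w : Fin N => ω (u, w) = true).card : ℝ) - p * N| ≤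
            2 * Real.sqrt (2 * p * N)).card + (univ.filter fun u : Fin m =>
          ¬ (|((univ.filter fun w : Fin N => ω (u, w) = true).card : ℝ) - p * N| ≤
            2 * Real.sqrt (2 * p * N))).card = m := by
        rw [Finset.card_filter_add_card_filter_not, Finset.card_univ, Fintype.card_fin]
      have hFcard : j ≤ (univ.filter fun u : Fin m =>
          ¬ (|((univ.filter fun w : Fin N => ω (u, w) = true).card : ℝ) - p * N| ≤
            2 * Real.sqrt (2 * p * N))).card := by omega
      obtain ⟨S, hSsub, hScard⟩ := Finset.exists_subset_card_eq hFcard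
      refine Set.mem_biUnion (Finset.mem_coe.2 (Finset.mem_powersetCard.2
        ⟨Finset.subset_univ S, hScard⟩)) ?_
      simp only [Set.mem_setOf_eq]
      intro u hu
      have := (Finset.mem_filter.1 (hSsub hu)).2
      simp only [hA, Set.mem_setOf_eq]
      exact this
    have key : μ Eᶜ ≤ ENNReal.ofReal ((2 : ℝ) ^ m * (1 / 8) ^ j) := by
      calc μ Eᶜ ≤ ∑ S ∈ powersetCard j (univ : Finset (Fin m)),
          μ {ω : Fin m × Fin N → Bool | ∀ u ∈ S, (fun w => ω (u, w)) ∈ A} :=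
        le_trans (measure_mono hsub) (measure_biUnion_finset_le _ _)
      _ = ∑ S ∈ powersetCard j (univ : Finset (Fin m)),
          ((Measure.pi fun _ : Fin N => bern p) A) ^ S.card :=
        Finset.sum_congr rfl fun S _ => blocks p hp0 hp1 m N A S
      _ ≤ ∑ _S ∈ powersetCard j (univ : Finset (Fin m)), ENNReal.ofReal ((1 / 8 : ℝ) ^ j) := by
          refine Finset.sum_le_sum fun S hS => ?_
          rw [(Finset.mem_powersetCard.1 hS).2]
          calc (Measure.pi fun _ : Fin N => bern p) A ^ j
              ≤ ENNReal.ofReal (1 / 8) ^ j := pow_le_pow_left' (cheb p N hp0 hp1 hpN) j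
            _ = ENNReal.ofReal ((1 / 8 : ℝ) ^ j) := (ENNReal.ofReal_pow (by norm_num) j).symm
      _ = (Nat.choose m j) • ENNReal.ofReal ((1 / 8 : ℝ) ^ j) := by
          rw [Finset.sum_const, Finset.card_powersetCard, Finset.card_univ, Fintype.card_fin]
      _ ≤ ENNReal.ofReal ((2 : ℝ) ^ m * (1 / 8) ^ j) := by
          rw [nsmul_eq_mul, ← ENNReal.ofReal_natCast (Nat.choose m j),
            ← ENNReal.ofReal_mul (Nat.cast_nonneg _)]
          apply ENNReal.ofReal_le_ofReal
          apply mul_le_mul_of_nonneg_right _ (by positivity)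
          calc ((Nat.choose m j : ℝ)) ≤ ((2 ^ m : ℕ) : ℝ) := by
                exact_mod_cast choose_le_two_pow' m j
          _ = (2 : ℝ) ^ m := by push_cast; ring
    have hxkey : μ Eᶜ ≤ ENNReal.ofReal (Real.exp (-(n : ℝ) / (64 * k))) := by
      refine key.trans (ENNReal.ofReal_le_ofReal ?_)
      rw [hx]
      exact realineq m j hj3
    set x := Real.exp (-(n : ℝ) / (64 * k)) with hxdef
    have hx0 : 0 ≤ x := (Real.exp_pos _).le
    have hx1 : x ≤ 1 := Real.exp_le_one_iff.2
      (div_nonpos_of_nonpos_of_nonneg (neg_nonpos.2 (Nat.cast_nonneg n)) (by positivity))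
    have hsum := prob_add_prob_compl (μ := μ) hEmeas
    have h2 : ENNReal.ofReal (1 - 2 * x) + ENNReal.ofReal x ≤ μ E + μ Eᶜ := by
      rw [hsum]
      rcases le_or_gt (1 - 2 * x) 0 with h | h
      · rw [ENNReal.ofReal_of_nonpos h, zero_add]
        exact ENNReal.ofReal_le_one.2 hx1
      · rw [← ENNReal.ofReal_add h.le hx0]
        exact ENNReal.ofReal_le_one.2 (by linarith)
    have h3 : ENNReal.ofReal (1 - 2 * x) + ENNReal.ofReal x ≤ μ E + ENNReal.ofReal x :=
      le_trans h2 (add_le_add_right hxkey _)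
    exact (ENNReal.add_le_add_iff_right ENNReal.ofReal_ne_top).1 h3
end
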